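/- Let φ be a monotone 1-in-3 SAT instance with n variables and m clauses in which every variable occurs in at least one clause, and let G_φ be the associated classified matching instance. Then G_φ admits a matching that is popular among all feasible matchings if and only if φ has a 1-in-3 satisfying assignment. -/

import Mathlib

open scoped Classical

/-- Applicants of the instance `G_φ`: `av i = aᵢ`, `bv i = bᵢ`,
`ac i j = a_{ij}` and `bc i j = b_{ij}` (the latter two meaningful when `i ∈ C_j`). -/
inductive App (n m : ℕ) where
  | av (i : Fin n) : App n m
  | bv (i : Fin n) : App n m
  | ac (i : Fin n) (j : Fin m) : App n m
  | bc (i : Fin n) (j : Fin m) : App n m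
  deriving DecidableEq, Fintype

/-- Posts of the instance `G_φ`: `pv i = pᵢ`, `pt i = pᵢᵗ`, `pf i = pᵢᶠ`
and `pc j = pⱼᶜ`. -/
inductive Post (n m : ℕ) where
  | pv (i : Fin n) : Post n m
  | pt (i : Fin n) : Post n m
  | pf (i : Fin n) : Post n m
  | pc (j : Fin m) : Post n m
  deriving DecidableEq, Fintype

namespace Red

variable {n m : ℕ}

/-- The rank-1 (first-choice) post of each applicant. -/
def rank1 : App n m → Post n m
  | .av i => .pv i
  | .bv i => .pv i
  | .ac _ j => .pc j
  | .bc _ j => .pc j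

/-- The rank-2 (second-choice) post of each applicant. -/
def rank2 : App n m → Post n m
  | .av i => .pt i
  | .bv i => .pf i
  | .ac i _ => .pt i
  | .bc i _ => .pf i

/-- The rank of a post on an applicant's preference list (3 = unacceptable). -/
def rk (x : App n m) (p : Post n m) : ℕ :=
  if p = rank1 x then 1 else if p = rank2 x then 2 else 3

/-- Only pairs `(i, j)` with `i ∈ C_j` give rise to applicants `a_{ij}`, `b_{ij}`. -/
def Valid (Cl : Fin m → Finset (Fin n)) : App n m → Prop
  | .av _ => True
  | .bv _ => True
  | .ac i j => i ∈ Cl j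
  | .bc i j => i ∈ Cl j

/-- `k_i`: the number of clauses containing variable `i`. -/
def occ (Cl : Fin m → Finset (Fin n)) (i : Fin n) : ℕ :=
  (Finset.univ.filter fun j => i ∈ Cl j).card

/-- `M` is a matching of `G_φ`: each (existing) applicant is assigned to at most one
post on its preference list. -/
def IsMatching (Cl : Fin m → Finset (Fin n)) (M : App n m → Option (Post n m)) : Prop :=
  ∀ x p, M x = some p → Valid Cl x ∧ (p = rank1 x ∨ p = rank2 x)

/-- The number of applicants matched to post `p`. -/
def cnt (M : App n m → Option (Post n m)) (p : Post n m) : ℕ :=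
  (Finset.univ.filter fun x => M x = some p).card

/-- `M` is feasible: all post quotas and all class quotas of `G_φ` are respected. -/
def Feasible (Cl : Fin m → Finset (Fin n)) (M : App n m → Option (Post n m)) : Prop :=
  -- post `pᵢ` has quota 1 and no classes
  (∀ i, cnt M (.pv i) ≤ 1) ∧
  -- post `pⱼᶜ` has quota 3
  (∀ j, cnt M (.pc j) ≤ 3) ∧
  -- class `S_{ij} = {a_{ij}, b_{ij}}` of `pⱼᶜ`, quota 1
  (∀ j, ∀ i ∈ Cl j,
    (({App.ac i j, App.bc i j} : Finset (App n m)).filter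
      fun x => M x = some (.pc j)).card ≤ 1) ∧
  -- class `S_{1j} = {a_{ij} : i ∈ C_j}` of `pⱼᶜ`, quota 1
  (∀ j, ((Cl j).filter fun i => M (.ac i j) = some (.pc j)).card ≤ 1) ∧
  -- class `S_{2j} = {b_{ij} : i ∈ C_j}` of `pⱼᶜ`, quota 2
  (∀ j, ((Cl j).filter fun i => M (.bc i j) = some (.pc j)).card ≤ 2) ∧
  -- post `pᵢᵗ` has quota `k_i`
  (∀ i, cnt M (.pt i) ≤ occ Cl i) ∧
  -- class `Sⱼᵗ = {a_{ij}, aᵢ}` of `pᵢᵗ`, quota 1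
  (∀ i, ∀ j, i ∈ Cl j →
    (({App.ac i j, App.av i} : Finset (App n m)).filter
      fun x => M x = some (.pt i)).card ≤ 1) ∧
  -- post `pᵢᶠ` has quota `k_i`
  (∀ i, cnt M (.pf i) ≤ occ Cl i) ∧
  -- class `Sⱼᶠ = {b_{ij}, bᵢ}` of `pᵢᶠ`, quota 1
  (∀ i, ∀ j, i ∈ Cl j →
    (({App.bc i j, App.bv i} : Finset (App n m)).filter
      fun x => M x = some (.pf i)).card ≤ 1)

/-- Applicant `x` prefers matching `M` to matching `M'`. -/
def Prefers (M M' : App n m → Option (Post n m)) (x : App n m) : Prop :=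
  ∃ p, M x = some p ∧ (M' x = none ∨ ∃ p', M' x = some p' ∧ rk x p < rk x p')

/-- `M'` is more popular than `M`. -/
def MorePopular (M' M : App n m → Option (Post n m)) : Prop :=
  (Finset.univ.filter fun x => Prefers M M' x).card <
    (Finset.univ.filter fun x => Prefers M' M x).card

/-- `M` is popular among all feasible matchings of `G_φ`. -/
def Popular (Cl : Fin m → Finset (Fin n)) (M : App n m → Option (Post n m)) : Prop :=
  IsMatching Cl M ∧ Feasible Cl M ∧
    ∀ M', IsMatching Cl M' → Feasible Cl M' → ¬ MorePopular M' M

/-- `φ` has a 1-in-3 satisfying assignment. -/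
def OneInThree (Cl : Fin m → Finset (Fin n)) : Prop :=
  ∃ η : Fin n → Bool, ∀ j, ((Cl j).filter fun i => η i = true).card = 1

end Red

namespace Red

variable {n m : ℕ} {Cl : Fin m → Finset (Fin n)}

lemma rank1_ne_rank2 (x : App n m) : rank1 x ≠ rank2 x := by
  cases x <;> simp [rank1, rank2]

lemma rk_rank1 (x : App n m) : rk x (rank1 x) = 1 := by simp [rk]

lemma rk_rank2 (x : App n m) : rk x (rank2 x) = 2 := by
  rw [rk, if_neg (Ne.symm (rank1_ne_rank2 x)), if_pos rfl]

lemma prefers_ne {M M' : App n m → Option (Post n m)} {x} (h : Prefers M M' x) :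
    M x ≠ M' x := by
  obtain ⟨p, hp, h2⟩ := h
  rcases h2 with h2 | ⟨p', hp', hlt⟩
  · rw [hp, h2]; simp
  · intro h; rw [hp, hp'] at h
    injection h with h; subst h; exact lt_irrefl _ hlt

lemma not_prefers_of_eq {M M' : App n m → Option (Post n m)} {x}
    (h : M x = M' x) : ¬ Prefers M M' x := fun hp => prefers_ne hp h

lemma not_prefers_of_eq' {M M' : App n m → Option (Post n m)} {x}
    (h : M' x = M x) : ¬ Prefers M M' x := fun hp => prefers_ne hp h.symm

lemma prefers_of_gain {M M' : App n m → Option (Post n m)} {x}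
    (h1 : M' x = some (rank1 x)) (h2 : M x = some (rank2 x)) : Prefers M' M x :=
  ⟨_, h1, Or.inr ⟨_, h2, by rw [rk_rank1, rk_rank2]; omega⟩⟩

lemma prefers_of_unmatched {M M' : App n m → Option (Post n m)} {x p}
    (h1 : M' x = some p) (h2 : M x = none) : Prefers M' M x := ⟨_, h1, Or.inl h2⟩

lemma not_prefers_of_none {M M' : App n m → Option (Post n m)} {x}
    (h : M x = none) : ¬ Prefers M M' x := by
  rintro ⟨p, hp, -⟩; rw [h] at hp; cases hp

lemma not_prefers_of_better {M M' : App n m → Option (Post n m)} {x}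
    (h2 : M x = some (rank2 x)) (h1 : M' x = some (rank1 x)) : ¬ Prefers M M' x := by
  rintro ⟨p, hp, hh⟩
  rw [h2] at hp; injection hp with hp; subst hp
  rcases hh with hh | ⟨p', hp', hlt⟩
  · rw [h1] at hh; cases hh
  · rw [h1] at hp'; injection hp' with hp'; subst hp'
    rw [rk_rank1, rk_rank2] at hlt; omega

lemma beats {M M' : App n m → Option (Post n m)} (S T : Finset (App n m))
    (hS : ∀ x, Prefers M M' x → x ∈ S)
    (hT : ∀ x ∈ T, Prefers M' M x)
    (hc : S.card < T.card) : MorePopular M' M := by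
  unfold MorePopular
  calc (Finset.univ.filter fun x => Prefers M M' x).card
      ≤ S.card := Finset.card_le_card (fun x hx => hS x (Finset.mem_filter.mp hx).2)
    _ < T.card := hc
    _ ≤ _ := Finset.card_le_card (fun x hx =>
        Finset.mem_filter.mpr ⟨Finset.mem_univ _, hT x hx⟩)

section MatchingFacts

variable {M : App n m → Option (Post n m)}

lemma av_cases (hM : IsMatching Cl M) {i p} (h : M (.av i) = some p) : p = .pv i ∨ p = .pt i := by
  simpa [rank1, rank2] using (hM _ _ h).2

lemma bv_cases (hM : IsMatching Cl M) {i p} (h : M (.bv i) = some p) : p = .pv i ∨ p = .pf i := by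
  simpa [rank1, rank2] using (hM _ _ h).2

lemma ac_cases (hM : IsMatching Cl M) {i j p} (h : M (.ac i j) = some p) : p = .pc j ∨ p = .pt i := by
  simpa [rank1, rank2] using (hM _ _ h).2

lemma bc_cases (hM : IsMatching Cl M) {i j p} (h : M (.bc i j) = some p) : p = .pc j ∨ p = .pf i := by
  simpa [rank1, rank2] using (hM _ _ h).2

lemma ac_valid (hM : IsMatching Cl M) {i j p} (h : M (.ac i j) = some p) : i ∈ Cl j := (hM _ _ h).1

lemma bc_valid (hM : IsMatching Cl M) {i j p} (h : M (.bc i j) = some p) : i ∈ Cl j := (hM _ _ h).1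

end MatchingFacts

end Red
namespace Red

variable {n m : ℕ} {Cl : Fin m → Finset (Fin n)} {M : App n m → Option (Post n m)}

lemma occ_pos (hocc : ∀ i, ∃ j, i ∈ Cl j) (i : Fin n) : 1 ≤ occ Cl i := by
  obtain ⟨j, hj⟩ := hocc i
  rw [occ]
  exact Finset.card_pos.mpr ⟨j, Finset.mem_filter.mpr ⟨Finset.mem_univ _, hj⟩⟩

lemma cnt_pv_le (hM : IsMatching Cl M) {i : Fin n}
    (h : ¬ (M (.av i) = some (.pv i) ∧ M (.bv i) = some (.pv i))) :
    cnt M (.pv i) ≤ 1 := by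
  have key : ∀ z : App n m, M z = some (.pv i) → z = .av i ∨ z = .bv i := by
    intro z hz
    cases z with
    | av i' => rcases av_cases hM hz with h' | h'
               · injection h' with h''; subst h''; exact Or.inl rfl
               · cases h'
    | bv i' => rcases bv_cases hM hz with h' | h'
               · injection h' with h''; subst h''; exact Or.inr rfl
               · cases h'
    | ac i' j' => rcases ac_cases hM hz with h' | h' <;> cases h'
    | bc i' j' => rcases bc_cases hM hz with h' | h' <;> cases h'
  rw [cnt]
  apply Finset.card_le_one.mpr
  intro x hx y hy
  simp only [Finset.mem_filter, Finset.mem_univ, true_and] at hx hy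
  rcases key x hx with rfl | rfl <;> rcases key y hy with rfl | rfl
  · rfl
  · exact absurd ⟨hx, hy⟩ h
  · exact absurd ⟨hy, hx⟩ h
  · rfl

lemma cnt_pc_le (hM : IsMatching Cl M) (h3 : ∀ j, (Cl j).card = 3) {j : Fin m}
    (hpair : ∀ i ∈ Cl j, (({App.ac i j, App.bc i j} : Finset (App n m)).filter
      fun x => M x = some (.pc j)).card ≤ 1) :
    cnt M (.pc j) ≤ 3 := by
  have heq : (Finset.univ.filter fun x => M x = some (Post.pc j))
      ⊆ (Cl j).biUnion (fun i => ({App.ac i j, App.bc i j} : Finset (App n m)).filter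
          fun x => M x = some (.pc j)) := by
    intro x hx
    have hx := (Finset.mem_filter.mp hx).2
    rw [Finset.mem_biUnion]
    cases x with
    | av i' => rcases av_cases hM hx with h' | h' <;> cases h'
    | bv i' => rcases bv_cases hM hx with h' | h' <;> cases h'
    | ac i' j' =>
        rcases ac_cases hM hx with h' | h'
        · injection h' with h''; subst h''
          exact ⟨i', ac_valid hM hx, Finset.mem_filter.mpr ⟨by simp, hx⟩⟩
        · cases h'
    | bc i' j' =>
        rcases bc_cases hM hx with h' | h'
        · injection h' with h''; subst h''
          exact ⟨i', bc_valid hM hx, Finset.mem_filter.mpr ⟨by simp, hx⟩⟩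
        · cases h'
  calc cnt M (.pc j) ≤ ((Cl j).biUnion _).card := Finset.card_le_card heq
    _ ≤ (Cl j).sum (fun i => (({App.ac i j, App.bc i j} : Finset (App n m)).filter
          fun x => M x = some (.pc j)).card) := Finset.card_biUnion_le
    _ ≤ (Cl j).sum (fun _ => 1) := Finset.sum_le_sum hpair
    _ = 3 := by rw [Finset.sum_const, h3 j]; simp

lemma cnt_pt_le (hM : IsMatching Cl M) (hocc : ∀ i, ∃ j, i ∈ Cl j) {i : Fin n}
    (hcls : ∀ j, i ∈ Cl j → (({App.ac i j, App.av i} : Finset (App n m)).filter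
      fun x => M x = some (.pt i)).card ≤ 1) :
    cnt M (.pt i) ≤ occ Cl i := by
  by_cases hav : M (.av i) = some (.pt i)
  · have hnone : ∀ j, M (.ac i j) ≠ some (.pt i) := by
      intro j hj
      have hij : i ∈ Cl j := ac_valid hM hj
      have h1 := hcls j hij
      have h2 : ({App.ac i j, App.av i} : Finset (App n m)).filter
          (fun x => M x = some (.pt i)) = {App.ac i j, App.av i} := by
        rw [Finset.filter_eq_self]
        intro x hx
        rcases Finset.mem_insert.mp hx with rfl | hx
        · exact hj
        · rw [Finset.mem_singleton.mp hx]; exact hav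
      rw [h2, Finset.card_insert_of_notMem (by simp), Finset.card_singleton] at h1
      omega
    have hsub : (Finset.univ.filter fun x => M x = some (Post.pt i)) ⊆ {App.av i} := by
      intro x hx
      have hx := (Finset.mem_filter.mp hx).2
      cases x with
      | av i' => rcases av_cases hM hx with h' | h'
                 · cases h'
                 · injection h' with h''; subst h''; simp
      | bv i' => rcases bv_cases hM hx with h' | h' <;> cases h'
      | ac i' j' =>
          rcases ac_cases hM hx with h' | h'
          · cases h'
          · injection h' with h''; subst h''; exact absurd hx (hnone j')
      | bc i' j' => rcases bc_cases hM hx with h' | h' <;> cases h'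
    calc cnt M (.pt i) ≤ 1 := by
          simpa [cnt] using Finset.card_le_card hsub
      _ ≤ occ Cl i := occ_pos hocc i
  · have hsub : (Finset.univ.filter fun x => M x = some (Post.pt i)) ⊆
        (Finset.univ.filter fun j => i ∈ Cl j).image (fun j => App.ac i j) := by
      intro x hx
      have hx := (Finset.mem_filter.mp hx).2
      cases x with
      | av i' => rcases av_cases hM hx with h' | h'
                 · cases h'
                 · injection h' with h''; subst h''; exact absurd hx hav
      | bv i' => rcases bv_cases hM hx with h' | h' <;> cases h'
      | ac i' j' =>
          rcases ac_cases hM hx with h' | h'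
          · cases h'
          · injection h' with h''; subst h''
            exact Finset.mem_image.mpr ⟨j', Finset.mem_filter.mpr
              ⟨Finset.mem_univ _, ac_valid hM hx⟩, rfl⟩
      | bc i' j' => rcases bc_cases hM hx with h' | h' <;> cases h'
    calc cnt M (.pt i) ≤ _ := Finset.card_le_card hsub
      _ ≤ occ Cl i := Finset.card_image_le

lemma cnt_pf_le (hM : IsMatching Cl M) (hocc : ∀ i, ∃ j, i ∈ Cl j) {i : Fin n}
    (hcls : ∀ j, i ∈ Cl j → (({App.bc i j, App.bv i} : Finset (App n m)).filter
      fun x => M x = some (.pf i)).card ≤ 1) :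
    cnt M (.pf i) ≤ occ Cl i := by
  by_cases hbv : M (.bv i) = some (.pf i)
  · have hnone : ∀ j, M (.bc i j) ≠ some (.pf i) := by
      intro j hj
      have hij : i ∈ Cl j := bc_valid hM hj
      have h1 := hcls j hij
      have h2 : ({App.bc i j, App.bv i} : Finset (App n m)).filter
          (fun x => M x = some (.pf i)) = {App.bc i j, App.bv i} := by
        rw [Finset.filter_eq_self]
        intro x hx
        rcases Finset.mem_insert.mp hx with rfl | hx
        · exact hj
        · rw [Finset.mem_singleton.mp hx]; exact hbv
      rw [h2, Finset.card_insert_of_notMem (by simp), Finset.card_singleton] at h1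
      omega
    have hsub : (Finset.univ.filter fun x => M x = some (Post.pf i)) ⊆ {App.bv i} := by
      intro x hx
      have hx := (Finset.mem_filter.mp hx).2
      cases x with
      | av i' => rcases av_cases hM hx with h' | h' <;> cases h'
      | bv i' => rcases bv_cases hM hx with h' | h'
                 · cases h'
                 · injection h' with h''; subst h''; simp
      | ac i' j' => rcases ac_cases hM hx with h' | h' <;> cases h'
      | bc i' j' =>
          rcases bc_cases hM hx with h' | h'
          · cases h'
          · injection h' with h''; subst h''; exact absurd hx (hnone j')
    calc cnt M (.pf i) ≤ 1 := by simpa [cnt] using Finset.card_le_card hsub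
      _ ≤ occ Cl i := occ_pos hocc i
  · have hsub : (Finset.univ.filter fun x => M x = some (Post.pf i)) ⊆
        (Finset.univ.filter fun j => i ∈ Cl j).image (fun j => App.bc i j) := by
      intro x hx
      have hx := (Finset.mem_filter.mp hx).2
      cases x with
      | av i' => rcases av_cases hM hx with h' | h' <;> cases h'
      | bv i' => rcases bv_cases hM hx with h' | h'
                 · cases h'
                 · injection h' with h''; subst h''; exact absurd hx hbv
      | ac i' j' => rcases ac_cases hM hx with h' | h' <;> cases h'
      | bc i' j' =>
          rcases bc_cases hM hx with h' | h'
          · cases h'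
          · injection h' with h''; subst h''
            exact Finset.mem_image.mpr ⟨j', Finset.mem_filter.mpr
              ⟨Finset.mem_univ _, bc_valid hM hx⟩, rfl⟩
    calc cnt M (.pf i) ≤ _ := Finset.card_le_card hsub
      _ ≤ occ Cl i := Finset.card_image_le

end Red
namespace Red

variable {n m : ℕ} {Cl : Fin m → Finset (Fin n)}

lemma rk_lt_two {x : App n m} {p : Post n m} (h : rk x p < 2) : p = rank1 x := by
  rw [rk] at h
  split_ifs at h with h1 h2
  · exact h1
  · omega
  · omega

/-- helper: two distinct applicants matched to a quota-1 post is impossible -/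
lemma not_both {M : App n m → Option (Post n m)} {p : Post n m} {x y : App n m}
    (hq : cnt M p ≤ 1) (hx : M x = some p) (hy : M y = some p) (hxy : x ≠ y) : False := by
  have : 1 < cnt M p := Finset.one_lt_card.mpr
    ⟨x, Finset.mem_filter.mpr ⟨Finset.mem_univ _, hx⟩,
     y, Finset.mem_filter.mpr ⟨Finset.mem_univ _, hy⟩, hxy⟩
  omega

/-- helper: both members of a pair class `S_{ij}` matched to `p_j^c` is impossible -/
lemma not_both_pair {M : App n m → Option (Post n m)} {i : Fin n} {j : Fin m}
    (hq : (({App.ac i j, App.bc i j} : Finset (App n m)).filter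
      fun x => M x = some (.pc j)).card ≤ 1)
    (h1 : M (.ac i j) = some (.pc j)) (h2 : M (.bc i j) = some (.pc j)) : False := by
  have : 1 < (({App.ac i j, App.bc i j} : Finset (App n m)).filter
      fun x => M x = some (.pc j)).card := Finset.one_lt_card.mpr
    ⟨App.ac i j, Finset.mem_filter.mpr ⟨by simp, h1⟩,
     App.bc i j, Finset.mem_filter.mpr ⟨by simp, h2⟩, by simp⟩
  omega

lemma prefers_of_rank1_of_ne {M M' : App n m → Option (Post n m)} {x : App n m}
    (hM' : IsMatching Cl M') (h1 : M x = some (rank1 x))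
    (h2 : M' x ≠ some (rank1 x)) : Prefers M M' x := by
  rcases hx' : M' x with _ | q
  · exact ⟨_, h1, Or.inl hx'⟩
  · rcases (hM' x q hx').2 with rfl | rfl
    · exact absurd hx' h2
    · exact prefers_of_gain h1 hx'

/-- The matching induced by an assignment `η`. -/
def Mh (Cl : Fin m → Finset (Fin n)) (η : Fin n → Bool) :
    App n m → Option (Post n m) := fun x =>
  match x with
  | .av i => if η i then some (.pt i) else some (.pv i)
  | .bv i => if η i then some (.pv i) else some (.pf i)
  | .ac i j => if i ∈ Cl j then (if η i then some (.pc j) else some (.pt i)) else none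
  | .bc i j => if i ∈ Cl j then (if η i then some (.pf i) else some (.pc j)) else none

variable {η : Fin n → Bool}

lemma Mh_matching : IsMatching Cl (Mh Cl η) := by
  intro x p h
  cases x with
  | av i =>
      refine ⟨trivial, ?_⟩
      simp only [Mh] at h
      split_ifs at h <;> (injection h with h; subst h; simp [rank1, rank2])
  | bv i =>
      refine ⟨trivial, ?_⟩
      simp only [Mh] at h
      split_ifs at h <;> (injection h with h; subst h; simp [rank1, rank2])
  | ac i j =>
      simp only [Mh] at h
      by_cases h1 : i ∈ Cl j
      · rw [if_pos h1] at h
        by_cases h2 : η i = true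
        · rw [if_pos h2] at h; injection h with h; subst h; exact ⟨h1, by simp [rank1]⟩
        · rw [if_neg h2] at h; injection h with h; subst h; exact ⟨h1, by simp [rank2]⟩
      · rw [if_neg h1] at h; cases h
  | bc i j =>
      simp only [Mh] at h
      by_cases h1 : i ∈ Cl j
      · rw [if_pos h1] at h
        by_cases h2 : η i = true
        · rw [if_pos h2] at h; injection h with h; subst h; exact ⟨h1, by simp [rank2]⟩
        · rw [if_neg h2] at h; injection h with h; subst h; exact ⟨h1, by simp [rank1]⟩
      · rw [if_neg h1] at h; cases h

lemma Mh_pair (hij : i ∈ Cl j) :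
    (({App.ac i j, App.bc i j} : Finset (App n m)).filter
      fun x => Mh Cl η x = some (.pc j)).card ≤ 1 := by
  apply Finset.card_le_one.mpr
  intro x hx y hy
  simp only [Finset.mem_filter, Finset.mem_insert, Finset.mem_singleton] at hx hy
  by_cases hi : η i = true
  · rcases hx.1 with rfl | rfl
    · rcases hy.1 with rfl | rfl
      · rfl
      · have := hy.2; simp [Mh, hij, hi] at this
    · have := hx.2; simp [Mh, hij, hi] at this
  · rcases hx.1 with rfl | rfl
    · have := hx.2; simp [Mh, hij, hi] at this
    · rcases hy.1 with rfl | rfl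
      · have := hy.2; simp [Mh, hij, hi] at this
      · rfl

lemma Mh_S1 (j : Fin m) :
    ((Cl j).filter fun i => Mh Cl η (.ac i j) = some (.pc j))
      = (Cl j).filter fun i => η i = true := by
  apply Finset.filter_congr
  intro i hij
  by_cases hi : η i = true <;> simp [Mh, hij, hi]

lemma Mh_S2 (j : Fin m) :
    ((Cl j).filter fun i => Mh Cl η (.bc i j) = some (.pc j))
      = (Cl j).filter fun i => ¬ (η i = true) := by
  apply Finset.filter_congr
  intro i hij
  by_cases hi : η i = true <;> simp [Mh, hij, hi]

lemma Mh_clsT (hij : i ∈ Cl j) :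
    (({App.ac i j, App.av i} : Finset (App n m)).filter
      fun x => Mh Cl η x = some (.pt i)).card ≤ 1 := by
  apply Finset.card_le_one.mpr
  intro x hx y hy
  simp only [Finset.mem_filter, Finset.mem_insert, Finset.mem_singleton] at hx hy
  by_cases hi : η i = true
  · rcases hx.1 with rfl | rfl
    · have := hx.2; simp [Mh, hij, hi] at this
    · rcases hy.1 with rfl | rfl
      · have := hy.2; simp [Mh, hij, hi] at this
      · rfl
  · rcases hx.1 with rfl | rfl
    · rcases hy.1 with rfl | rfl
      · rfl
      · have := hy.2; simp [Mh, hi] at this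
    · have := hx.2; simp [Mh, hi] at this

lemma Mh_clsF (hij : i ∈ Cl j) :
    (({App.bc i j, App.bv i} : Finset (App n m)).filter
      fun x => Mh Cl η x = some (.pf i)).card ≤ 1 := by
  apply Finset.card_le_one.mpr
  intro x hx y hy
  simp only [Finset.mem_filter, Finset.mem_insert, Finset.mem_singleton] at hx hy
  by_cases hi : η i = true
  · rcases hx.1 with rfl | rfl
    · rcases hy.1 with rfl | rfl
      · rfl
      · have := hy.2; simp [Mh, hi] at this
    · have := hx.2; simp [Mh, hi] at this
  · rcases hx.1 with rfl | rfl
    · have := hx.2; simp [Mh, hij, hi] at this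
    · rcases hy.1 with rfl | rfl
      · have := hy.2; simp [Mh, hij, hi] at this
      · rfl

lemma Mh_feasible (h3 : ∀ j, (Cl j).card = 3) (hocc : ∀ i, ∃ j, i ∈ Cl j)
    (hη : ∀ j, ((Cl j).filter fun i => η i = true).card = 1) :
    Feasible Cl (Mh Cl η) := by
  refine ⟨?_, ?_, ?_, ?_, ?_, ?_, ?_, ?_, ?_⟩
  · intro i
    apply cnt_pv_le Mh_matching
    rintro ⟨ha, hb⟩
    by_cases hi : η i = true <;> simp [Mh, hi] at ha hb
  · intro j
    exact cnt_pc_le Mh_matching h3 (fun i hij => Mh_pair hij)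
  · intro j i hij
    exact Mh_pair hij
  · intro j
    rw [Mh_S1, hη j]
  · intro j
    rw [Mh_S2]
    have := Finset.card_filter_add_card_filter_not
      (s := Cl j) (p := fun i => η i = true)
    rw [hη j, h3 j] at this
    omega
  · intro i
    exact cnt_pt_le Mh_matching hocc (fun j hij => Mh_clsT hij)
  · intro i j hij
    exact Mh_clsT hij
  · intro i
    exact cnt_pf_le Mh_matching hocc (fun j hij => Mh_clsF hij)
  · intro i j hij
    exact Mh_clsF hij

/-- the partner involution -/
def swap : App n m → App n m
  | .av i => .bv i
  | .bv i => .av i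
  | .ac i j => .bc i j
  | .bc i j => .ac i j

lemma swap_invol (x : App n m) : swap (swap x) = x := by cases x <;> rfl

lemma swap_key {M' : App n m → Option (Post n m)}
    (hM' : IsMatching Cl M') (hF' : Feasible Cl M') (x : App n m)
    (h : Prefers M' (Mh Cl η) x) : Prefers (Mh Cl η) M' (swap x) := by
  obtain ⟨p, hp1, hp2⟩ := h
  cases x with
  | av i =>
      by_cases hi : η i = true
      · -- Mη (av i) = pt i (rank 2); so M' (av i) = pv i
        have hm : Mh Cl η (App.av i) = some (.pt i) := by simp [Mh, hi]
        rcases hp2 with h2 | ⟨p', hp', hlt⟩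
        · rw [hm] at h2; cases h2
        · rw [hm] at hp'; injection hp' with hp'; subst hp'
          have : p = rank1 (App.av i) := rk_lt_two (by
            rwa [show (Post.pt i : Post n m) = rank2 (App.av i) from rfl, rk_rank2] at hlt)
          rw [this] at hp1
          -- swap = bv i, Mη (bv i) = pv i (rank1)
          apply prefers_of_rank1_of_ne hM'
          · show Mh Cl η (App.bv i) = some (rank1 (App.bv i))
            simp [Mh, hi, rank1]
          · intro hbv
            exact not_both (hF'.1 i) hp1 hbv (by simp [swap])
      · have hm : Mh Cl η (App.av i) = some (.pv i) := by simp [Mh, hi]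
        rcases hp2 with h2 | ⟨p', hp', hlt⟩
        · rw [hm] at h2; cases h2
        · rw [hm] at hp'; injection hp' with hp'; subst hp'
          rw [show (Post.pv i : Post n m) = rank1 (App.av i) from rfl, rk_rank1] at hlt
          have hpos : 1 ≤ rk (App.av i) p := by rw [rk]; split_ifs <;> omega
          omega
  | bv i =>
      by_cases hi : η i = true
      · have hm : Mh Cl η (App.bv i) = some (.pv i) := by simp [Mh, hi]
        rcases hp2 with h2 | ⟨p', hp', hlt⟩
        · rw [hm] at h2; cases h2
        · rw [hm] at hp'; injection hp' with hp'; subst hp'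
          rw [show (Post.pv i : Post n m) = rank1 (App.bv i) from rfl, rk_rank1] at hlt
          have hpos : 1 ≤ rk (App.bv i) p := by rw [rk]; split_ifs <;> omega
          omega
      · have hm : Mh Cl η (App.bv i) = some (.pf i) := by simp [Mh, hi]
        rcases hp2 with h2 | ⟨p', hp', hlt⟩
        · rw [hm] at h2; cases h2
        · rw [hm] at hp'; injection hp' with hp'; subst hp'
          have : p = rank1 (App.bv i) := rk_lt_two (by
            rwa [show (Post.pf i : Post n m) = rank2 (App.bv i) from rfl, rk_rank2] at hlt)
          rw [this] at hp1
          apply prefers_of_rank1_of_ne hM'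
          · show Mh Cl η (App.av i) = some (rank1 (App.av i))
            simp [Mh, hi, rank1]
          · intro hav
            exact not_both (hF'.1 i) hp1 hav (by simp [swap])
  | ac i j =>
      have hij : i ∈ Cl j := (hM' _ _ hp1).1
      by_cases hi : η i = true
      · have hm : Mh Cl η (App.ac i j) = some (.pc j) := by simp [Mh, hij, hi]
        rcases hp2 with h2 | ⟨p', hp', hlt⟩
        · rw [hm] at h2; cases h2
        · rw [hm] at hp'; injection hp' with hp'; subst hp'
          rw [show (Post.pc j : Post n m) = rank1 (App.ac i j) from rfl, rk_rank1] at hlt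
          have hpos : 1 ≤ rk (App.ac i j) p := by rw [rk]; split_ifs <;> omega
          omega
      · have hm : Mh Cl η (App.ac i j) = some (.pt i) := by simp [Mh, hij, hi]
        rcases hp2 with h2 | ⟨p', hp', hlt⟩
        · rw [hm] at h2; cases h2
        · rw [hm] at hp'; injection hp' with hp'; subst hp'
          have : p = rank1 (App.ac i j) := rk_lt_two (by
            rwa [show (Post.pt i : Post n m) = rank2 (App.ac i j) from rfl, rk_rank2] at hlt)
          rw [this] at hp1
          apply prefers_of_rank1_of_ne hM'
          · show Mh Cl η (App.bc i j) = some (rank1 (App.bc i j))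
            simp [Mh, hij, hi, rank1]
          · intro hbc
            exact not_both_pair (hF'.2.2.1 j i hij) hp1 hbc
  | bc i j =>
      have hij : i ∈ Cl j := (hM' _ _ hp1).1
      by_cases hi : η i = true
      · have hm : Mh Cl η (App.bc i j) = some (.pf i) := by simp [Mh, hij, hi]
        rcases hp2 with h2 | ⟨p', hp', hlt⟩
        · rw [hm] at h2; cases h2
        · rw [hm] at hp'; injection hp' with hp'; subst hp'
          have : p = rank1 (App.bc i j) := rk_lt_two (by
            rwa [show (Post.pf i : Post n m) = rank2 (App.bc i j) from rfl, rk_rank2] at hlt)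
          rw [this] at hp1
          apply prefers_of_rank1_of_ne hM'
          · show Mh Cl η (App.ac i j) = some (rank1 (App.ac i j))
            simp [Mh, hij, hi, rank1]
          · intro hac
            exact not_both_pair (hF'.2.2.1 j i hij) hac hp1
      · have hm : Mh Cl η (App.bc i j) = some (.pc j) := by simp [Mh, hij, hi]
        rcases hp2 with h2 | ⟨p', hp', hlt⟩
        · rw [hm] at h2; cases h2
        · rw [hm] at hp'; injection hp' with hp'; subst hp'
          rw [show (Post.pc j : Post n m) = rank1 (App.bc i j) from rfl, rk_rank1] at hlt
          have hpos : 1 ≤ rk (App.bc i j) p := by rw [rk]; split_ifs <;> omega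
          omega

lemma Mh_popular (h3 : ∀ j, (Cl j).card = 3) (hocc : ∀ i, ∃ j, i ∈ Cl j)
    (hη : ∀ j, ((Cl j).filter fun i => η i = true).card = 1) :
    Popular Cl (Mh Cl η) := by
  refine ⟨Mh_matching, Mh_feasible h3 hocc hη, ?_⟩
  intro M' hM' hF' hmp
  have hle : (Finset.univ.filter fun x => Prefers M' (Mh Cl η) x).card ≤
      (Finset.univ.filter fun x => Prefers (Mh Cl η) M' x).card := by
    apply Finset.card_le_card_of_injOn swap
    · intro x hx
      exact Finset.mem_filter.mpr ⟨Finset.mem_univ _,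
        swap_key hM' hF' x (Finset.mem_filter.mp hx).2⟩
    · intro x _ y _ hxy
      have := congrArg swap hxy
      rwa [swap_invol, swap_invol] at this
  exact absurd hmp (by rw [MorePopular]; omega)

end Red
namespace Red

variable {n m : ℕ} {Cl : Fin m → Finset (Fin n)}

lemma fcard_le {α : Type*} {s : Finset α} {p q : α → Prop} [DecidablePred p] [DecidablePred q]
    (h : ∀ x ∈ s, p x → q x) : (s.filter p).card ≤ (s.filter q).card := by
  apply Finset.card_le_card
  intro x hx
  have hx' := Finset.mem_filter.mp hx
  exact Finset.mem_filter.mpr ⟨hx'.1, h x hx'.1 hx'.2⟩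

lemma not_both_mem {α : Type*} {s : Finset α} {P : α → Prop} [DecidablePred P] {x y : α}
    (hcard : (s.filter P).card ≤ 1) (hx : x ∈ s) (hy : y ∈ s) (hxy : x ≠ y)
    (hPx : P x) (hPy : P y) : False := by
  have : 1 < (s.filter P).card := Finset.one_lt_card.mpr
    ⟨x, Finset.mem_filter.mpr ⟨hx, hPx⟩, y, Finset.mem_filter.mpr ⟨hy, hPy⟩, hxy⟩
  omega

lemma feasible_of_classes {M₁ : App n m → Option (Post n m)}
    (hM₁ : IsMatching Cl M₁)
    (h3 : ∀ j, (Cl j).card = 3) (hocc : ∀ i, ∃ j, i ∈ Cl j)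
    (h1 : ∀ i, ¬ (M₁ (.av i) = some (.pv i) ∧ M₁ (.bv i) = some (.pv i)))
    (h2 : ∀ j, ∀ i ∈ Cl j, (({App.ac i j, App.bc i j} : Finset (App n m)).filter
      fun x => M₁ x = some (.pc j)).card ≤ 1)
    (h4 : ∀ j, ((Cl j).filter fun i => M₁ (.ac i j) = some (.pc j)).card ≤ 1)
    (h5 : ∀ j, ((Cl j).filter fun i => M₁ (.bc i j) = some (.pc j)).card ≤ 2)
    (h7 : ∀ i, ∀ j, i ∈ Cl j → (({App.ac i j, App.av i} : Finset (App n m)).filter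
      fun x => M₁ x = some (.pt i)).card ≤ 1)
    (h9 : ∀ i, ∀ j, i ∈ Cl j → (({App.bc i j, App.bv i} : Finset (App n m)).filter
      fun x => M₁ x = some (.pf i)).card ≤ 1) :
    Feasible Cl M₁ :=
  ⟨fun i => cnt_pv_le hM₁ (h1 i), fun j => cnt_pc_le hM₁ h3 (h2 j), h2, h4, h5,
   fun i => cnt_pt_le hM₁ hocc (fun j hij => h7 i j hij), h7,
   fun i => cnt_pf_le hM₁ hocc (fun j hij => h9 i j hij), h9⟩

section Hard

variable {M : App n m → Option (Post n m)}

/-- Lemma L1: in a popular matching every post `pᵢ` is filled. -/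
lemma L1 (h3 : ∀ j, (Cl j).card = 3) (hocc : ∀ i, ∃ j, i ∈ Cl j)
    (hM : IsMatching Cl M) (hF : Feasible Cl M)
    (hpop : ∀ M', IsMatching Cl M' → Feasible Cl M' → ¬ MorePopular M' M)
    (i : Fin n) : M (.av i) = some (.pv i) ∨ M (.bv i) = some (.pv i) := by
  by_contra hcon
  push_neg at hcon
  obtain ⟨hA, hB⟩ := hcon
  set M₁ : App n m → Option (Post n m) :=
    fun x => if x = App.av i then some (Post.pv i) else M x with hM₁def
  have hch : ∀ x, x ≠ App.av i → M₁ x = M x := by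
    intro x hx; simp only [hM₁def, if_neg hx]
  have hchv : M₁ (App.av i) = some (Post.pv i) := by simp [hM₁def]
  have hM₁ : IsMatching Cl M₁ := by
    intro x p h
    by_cases hx : x = App.av i
    · subst hx; rw [hchv] at h; injection h with h; subst h
      exact ⟨trivial, Or.inl rfl⟩
    · rw [hch x hx] at h; exact hM x p h
  refine hpop M₁ hM₁ ?_ ?_
  · apply feasible_of_classes hM₁ h3 hocc
    · intro i'
      by_cases hi : i' = i
      · subst hi; rintro ⟨-, hb⟩
        rw [hch _ (by simp)] at hb; exact hB hb
      · rintro ⟨ha, hb⟩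
        rw [hch _ (by simp [hi])] at ha
        rw [hch _ (by simp)] at hb
        exact not_both (hF.1 i') ha hb (by simp)
    · intro j i' hi'
      refine le_trans (fcard_le ?_) (hF.2.2.1 j i' hi')
      intro x hx h
      rcases Finset.mem_insert.mp hx with rfl | hx
      · rwa [hch _ (by simp)] at h
      · rw [Finset.mem_singleton.mp hx] at h ⊢; rwa [hch _ (by simp)] at h
    · intro j
      refine le_trans (fcard_le ?_) (hF.2.2.2.1 j)
      intro i' _ h; rwa [hch _ (by simp)] at h
    · intro j
      refine le_trans (fcard_le ?_) (hF.2.2.2.2.1 j)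
      intro i' _ h; rwa [hch _ (by simp)] at h
    · intro i' j hij
      refine le_trans (fcard_le ?_) (hF.2.2.2.2.2.2.1 i' j hij)
      intro x hx h
      rcases Finset.mem_insert.mp hx with rfl | hx
      · rwa [hch _ (by simp)] at h
      · rw [Finset.mem_singleton.mp hx] at h ⊢
        by_cases hxa : (App.av i' : App n m) = App.av i
        · rw [hxa, hchv] at h; cases h
        · rwa [hch _ hxa] at h
    · intro i' j hij
      refine le_trans (fcard_le ?_) (hF.2.2.2.2.2.2.2.2 i' j hij)
      intro x hx h
      rcases Finset.mem_insert.mp hx with rfl | hx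
      · rwa [hch _ (by simp)] at h
      · rw [Finset.mem_singleton.mp hx] at h ⊢; rwa [hch _ (by simp)] at h
  · apply beats ∅ {App.av i}
    · intro x hx
      exfalso
      by_cases hxa : x = App.av i
      · subst hxa
        rcases hMa : M (App.av i) with _ | p
        · exact not_prefers_of_none hMa hx
        · rcases av_cases hM hMa with rfl | rfl
          · exact hA hMa
          · exact not_prefers_of_better hMa hchv hx
      · exact not_prefers_of_eq (hch x hxa).symm hx
    · intro x hx
      rw [Finset.mem_singleton.mp hx]
      rcases hMa : M (App.av i) with _ | p
      · exact prefers_of_unmatched hchv hMa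
      · rcases av_cases hM hMa with rfl | rfl
        · exact absurd hMa hA
        · exact prefers_of_gain hchv hMa
    · simp

end Hard

end Red
namespace Red

variable {n m : ℕ} {Cl : Fin m → Finset (Fin n)} {M : App n m → Option (Post n m)}

/-- every applicant `a_{ij}` is matched in a popular matching -/
lemma LA (h3 : ∀ j, (Cl j).card = 3) (hocc : ∀ i, ∃ j, i ∈ Cl j)
    (hM : IsMatching Cl M) (hF : Feasible Cl M)
    (hpop : ∀ M', IsMatching Cl M' → Feasible Cl M' → ¬ MorePopular M' M)
    {i : Fin n} {j : Fin m} (hij : i ∈ Cl j) :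
    M (.ac i j) = some (.pc j) ∨ M (.ac i j) = some (.pt i) := by
  rcases h0 : M (.ac i j) with _ | p
  swap
  · rcases ac_cases hM h0 with rfl | rfl
    · exact Or.inl rfl
    · exact Or.inr rfl
  exfalso
  by_cases hat : M (.av i) = some (.pt i)
  -- case αt : the chain move a_{ij}→p_i^t, a_i→p_i, b_i→⊥
  · have hb : M (.bv i) = some (.pv i) := by
      rcases L1 h3 hocc hM hF hpop i with h | h
      · rw [hat] at h; cases h
      · exact h
    set M₁ : App n m → Option (Post n m) := fun x =>
      if x = App.ac i j then some (Post.pt i)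
      else if x = App.av i then some (Post.pv i)
      else if x = App.bv i then none else M x with hd
    have hv1 : M₁ (App.ac i j) = some (Post.pt i) := by simp [hd]
    have hv2 : M₁ (App.av i) = some (Post.pv i) := by simp [hd]
    have hv3 : M₁ (App.bv i) = none := by simp [hd]
    have hch : ∀ x, x ≠ App.ac i j → x ≠ App.av i → x ≠ App.bv i → M₁ x = M x := by
      intro x hx1 hx2 hx3
      simp only [hd, if_neg hx1, if_neg hx2, if_neg hx3]
    have hM₁ : IsMatching Cl M₁ := by
      intro x p h
      by_cases hx1 : x = App.ac i j
      · subst hx1; rw [hv1] at h; injection h with h; subst h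
        exact ⟨hij, Or.inr rfl⟩
      by_cases hx2 : x = App.av i
      · subst hx2; rw [hv2] at h; injection h with h; subst h
        exact ⟨trivial, Or.inl rfl⟩
      by_cases hx3 : x = App.bv i
      · subst hx3; rw [hv3] at h; cases h
      · rw [hch x hx1 hx2 hx3] at h; exact hM x p h
    have himp_pc : ∀ (j' : Fin m) (x : App n m),
        M₁ x = some (.pc j') → M x = some (.pc j') := by
      intro j' x h
      by_cases hx1 : x = App.ac i j
      · subst hx1; rw [hv1] at h; injection h with h; cases h
      by_cases hx2 : x = App.av i
      · subst hx2; rw [hv2] at h; injection h with h; cases h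
      by_cases hx3 : x = App.bv i
      · subst hx3; rw [hv3] at h; cases h
      · rwa [hch x hx1 hx2 hx3] at h
    refine hpop M₁ hM₁ ?_ ?_
    · apply feasible_of_classes hM₁ h3 hocc
      · intro i₀
        by_cases hi : i₀ = i
        · subst hi; rintro ⟨-, h⟩; rw [hv3] at h; cases h
        · rintro ⟨ha', hb'⟩
          rw [hch _ (by simp) (by simp [hi]) (by simp)] at ha'
          rw [hch _ (by simp) (by simp) (by simp [hi])] at hb'
          exact not_both (hF.1 i₀) ha' hb' (by simp)
      · intro j₀ i₀ hi₀
        exact le_trans (fcard_le (fun x _ h => himp_pc j₀ x h)) (hF.2.2.1 j₀ i₀ hi₀)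
      · intro j₀
        exact le_trans (fcard_le (fun i' _ h => himp_pc j₀ _ h)) (hF.2.2.2.1 j₀)
      · intro j₀
        exact le_trans (fcard_le (fun i' _ h => himp_pc j₀ _ h)) (hF.2.2.2.2.1 j₀)
      · intro i₀ j₀ hij₀
        by_cases hi : i₀ = i
        · subst hi
          apply Finset.card_le_one.mpr
          have key : ∀ x ∈ ({App.ac i₀ j₀, App.av i₀} : Finset (App n m)).filter
              (fun x => M₁ x = some (.pt i₀)), x = App.ac i₀ j₀ := by
            intro x hx
            have hx' := Finset.mem_filter.mp hx
            rcases Finset.mem_insert.mp hx'.1 with rfl | hav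
            · rfl
            · exfalso
              rw [Finset.mem_singleton.mp hav] at hx'
              have h := hx'.2
              rw [hv2] at h; injection h with h; cases h
          intro x hx y hy
          rw [key x hx, key y hy]
        · refine le_trans (fcard_le ?_) (hF.2.2.2.2.2.2.1 i₀ j₀ hij₀)
          intro x hx h
          by_cases hx1 : x = App.ac i j
          · subst hx1; rw [hv1] at h; injection h with h; injection h with h
            exact absurd h.symm hi
          by_cases hx2 : x = App.av i
          · subst hx2; rw [hv2] at h; injection h with h; cases h
          by_cases hx3 : x = App.bv i
          · subst hx3; rw [hv3] at h; cases h
          · rwa [hch x hx1 hx2 hx3] at h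
      · intro i₀ j₀ hij₀
        refine le_trans (fcard_le ?_) (hF.2.2.2.2.2.2.2.2 i₀ j₀ hij₀)
        intro x hx h
        by_cases hx1 : x = App.ac i j
        · subst hx1; rw [hv1] at h; injection h with h; cases h
        by_cases hx2 : x = App.av i
        · subst hx2; rw [hv2] at h; injection h with h; cases h
        by_cases hx3 : x = App.bv i
        · subst hx3; rw [hv3] at h; cases h
        · rwa [hch x hx1 hx2 hx3] at h
    · apply beats {App.bv i} {App.ac i j, App.av i}
      · intro x hx
        by_cases hx3 : x = App.bv i
        · simp [hx3]
        exfalso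
        by_cases hx1 : x = App.ac i j
        · subst hx1; exact not_prefers_of_none h0 hx
        by_cases hx2 : x = App.av i
        · subst hx2; exact not_prefers_of_better hat hv2 hx
        · exact not_prefers_of_eq (hch x hx1 hx2 hx3).symm hx
      · intro x hx
        rcases Finset.mem_insert.mp hx with rfl | hx
        · exact prefers_of_unmatched hv1 h0
        · rw [Finset.mem_singleton.mp hx]
          exact prefers_of_gain hv2 hat
      · rw [Finset.card_singleton, Finset.card_insert_of_notMem (by simp),
          Finset.card_singleton]
        omega
  -- case ¬αt : directly insert a_{ij} into p_i^t
  · set M₁ : App n m → Option (Post n m) :=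
      fun x => if x = App.ac i j then some (Post.pt i) else M x with hd
    have hv1 : M₁ (App.ac i j) = some (Post.pt i) := by simp [hd]
    have hch : ∀ x, x ≠ App.ac i j → M₁ x = M x := by
      intro x hx; simp only [hd, if_neg hx]
    have hM₁ : IsMatching Cl M₁ := by
      intro x p h
      by_cases hx : x = App.ac i j
      · subst hx; rw [hv1] at h; injection h with h; subst h
        exact ⟨hij, Or.inr rfl⟩
      · rw [hch x hx] at h; exact hM x p h
    have himp_pc : ∀ (j' : Fin m) (x : App n m),
        M₁ x = some (.pc j') → M x = some (.pc j') := by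
      intro j' x h
      by_cases hx : x = App.ac i j
      · subst hx; rw [hv1] at h; injection h with h; cases h
      · rwa [hch x hx] at h
    refine hpop M₁ hM₁ ?_ ?_
    · apply feasible_of_classes hM₁ h3 hocc
      · rintro i₀ ⟨ha', hb'⟩
        rw [hch _ (by simp)] at ha'
        rw [hch _ (by simp)] at hb'
        exact not_both (hF.1 i₀) ha' hb' (by simp)
      · intro j₀ i₀ hi₀
        exact le_trans (fcard_le (fun x _ h => himp_pc j₀ x h)) (hF.2.2.1 j₀ i₀ hi₀)
      · intro j₀
        exact le_trans (fcard_le (fun i' _ h => himp_pc j₀ _ h)) (hF.2.2.2.1 j₀)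
      · intro j₀
        exact le_trans (fcard_le (fun i' _ h => himp_pc j₀ _ h)) (hF.2.2.2.2.1 j₀)
      · intro i₀ j₀ hij₀
        by_cases hcase : i₀ = i ∧ j₀ = j
        · obtain ⟨rfl, rfl⟩ := hcase
          apply Finset.card_le_one.mpr
          have key : ∀ x ∈ ({App.ac i₀ j₀, App.av i₀} : Finset (App n m)).filter
              (fun x => M₁ x = some (.pt i₀)), x = App.ac i₀ j₀ := by
            intro x hx
            have hx' := Finset.mem_filter.mp hx
            rcases Finset.mem_insert.mp hx'.1 with rfl | hav
            · rfl
            · exfalso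
              rw [Finset.mem_singleton.mp hav] at hx'
              have := hx'.2
              rw [hch _ (by simp)] at this
              exact hat this
          intro x hx y hy
          rw [key x hx, key y hy]
        · refine le_trans (fcard_le ?_) (hF.2.2.2.2.2.2.1 i₀ j₀ hij₀)
          intro x hx h
          by_cases hx1 : x = App.ac i j
          · exfalso
            subst hx1; rw [hv1] at h; injection h with h; injection h with h
            subst h
            rcases Finset.mem_insert.mp hx with heq | heq
            · injection heq with h1 h2; exact hcase ⟨rfl, h2.symm⟩
            · rw [Finset.mem_singleton] at heq; cases heq
          · rwa [hch x hx1] at h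
      · intro i₀ j₀ hij₀
        refine le_trans (fcard_le ?_) (hF.2.2.2.2.2.2.2.2 i₀ j₀ hij₀)
        intro x hx h
        by_cases hx1 : x = App.ac i j
        · subst hx1; rw [hv1] at h; injection h with h; cases h
        · rwa [hch x hx1] at h
    · apply beats ∅ {App.ac i j}
      · intro x hx
        exfalso
        by_cases hx1 : x = App.ac i j
        · subst hx1; exact not_prefers_of_none h0 hx
        · exact not_prefers_of_eq (hch x hx1).symm hx
      · intro x hx
        rw [Finset.mem_singleton.mp hx]
        exact prefers_of_unmatched hv1 h0
      · simp

end Red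
namespace Red

variable {n m : ℕ} {Cl : Fin m → Finset (Fin n)} {M : App n m → Option (Post n m)}

/-- every applicant `b_{ij}` is matched in a popular matching -/
lemma LB (h3 : ∀ j, (Cl j).card = 3) (hocc : ∀ i, ∃ j, i ∈ Cl j)
    (hM : IsMatching Cl M) (hF : Feasible Cl M)
    (hpop : ∀ M', IsMatching Cl M' → Feasible Cl M' → ¬ MorePopular M' M)
    {i : Fin n} {j : Fin m} (hij : i ∈ Cl j) :
    M (.bc i j) = some (.pc j) ∨ M (.bc i j) = some (.pf i) := by
  rcases h0 : M (.bc i j) with _ | p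
  swap
  · rcases bc_cases hM h0 with rfl | rfl
    · exact Or.inl rfl
    · exact Or.inr rfl
  exfalso
  by_cases hbf : M (.bv i) = some (.pf i)
  -- case αt : the chain move a_{ij}→p_i^t, a_i→p_i, b_i→⊥
  · have hb : M (.av i) = some (.pv i) := by
      rcases L1 h3 hocc hM hF hpop i with h | h
      · exact h
      · rw [hbf] at h; cases h
    set M₁ : App n m → Option (Post n m) := fun x =>
      if x = App.bc i j then some (Post.pf i)
      else if x = App.bv i then some (Post.pv i)
      else if x = App.av i then none else M x with hd
    have hv1 : M₁ (App.bc i j) = some (Post.pf i) := by simp [hd]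
    have hv2 : M₁ (App.bv i) = some (Post.pv i) := by simp [hd]
    have hv3 : M₁ (App.av i) = none := by simp [hd]
    have hch : ∀ x, x ≠ App.bc i j → x ≠ App.bv i → x ≠ App.av i → M₁ x = M x := by
      intro x hx1 hx2 hx3
      simp only [hd, if_neg hx1, if_neg hx2, if_neg hx3]
    have hM₁ : IsMatching Cl M₁ := by
      intro x p h
      by_cases hx1 : x = App.bc i j
      · subst hx1; rw [hv1] at h; injection h with h; subst h
        exact ⟨hij, Or.inr rfl⟩
      by_cases hx2 : x = App.bv i
      · subst hx2; rw [hv2] at h; injection h with h; subst h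
        exact ⟨trivial, Or.inl rfl⟩
      by_cases hx3 : x = App.av i
      · subst hx3; rw [hv3] at h; cases h
      · rw [hch x hx1 hx2 hx3] at h; exact hM x p h
    have himp_pc : ∀ (j' : Fin m) (x : App n m),
        M₁ x = some (.pc j') → M x = some (.pc j') := by
      intro j' x h
      by_cases hx1 : x = App.bc i j
      · subst hx1; rw [hv1] at h; injection h with h; cases h
      by_cases hx2 : x = App.bv i
      · subst hx2; rw [hv2] at h; injection h with h; cases h
      by_cases hx3 : x = App.av i
      · subst hx3; rw [hv3] at h; cases h
      · rwa [hch x hx1 hx2 hx3] at h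
    refine hpop M₁ hM₁ ?_ ?_
    · apply feasible_of_classes hM₁ h3 hocc
      · intro i₀
        by_cases hi : i₀ = i
        · subst hi; rintro ⟨h, -⟩; rw [hv3] at h; cases h
        · rintro ⟨ha', hb'⟩
          rw [hch _ (by simp) (by simp) (by simp [hi])] at ha'
          rw [hch _ (by simp) (by simp [hi]) (by simp)] at hb'
          exact not_both (hF.1 i₀) ha' hb' (by simp)
      · intro j₀ i₀ hi₀
        exact le_trans (fcard_le (fun x _ h => himp_pc j₀ x h)) (hF.2.2.1 j₀ i₀ hi₀)
      · intro j₀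
        exact le_trans (fcard_le (fun i' _ h => himp_pc j₀ _ h)) (hF.2.2.2.1 j₀)
      · intro j₀
        exact le_trans (fcard_le (fun i' _ h => himp_pc j₀ _ h)) (hF.2.2.2.2.1 j₀)
      · intro i₀ j₀ hij₀
        refine le_trans (fcard_le ?_) (hF.2.2.2.2.2.2.1 i₀ j₀ hij₀)
        intro x hx h
        by_cases hx1 : x = App.bc i j
        · subst hx1; rw [hv1] at h; injection h with h; cases h
        by_cases hx2 : x = App.bv i
        · subst hx2; rw [hv2] at h; injection h with h; cases h
        by_cases hx3 : x = App.av i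
        · subst hx3; rw [hv3] at h; cases h
        · rwa [hch x hx1 hx2 hx3] at h
      · intro i₀ j₀ hij₀
        by_cases hi : i₀ = i
        · subst hi
          apply Finset.card_le_one.mpr
          have key : ∀ x ∈ ({App.bc i₀ j₀, App.bv i₀} : Finset (App n m)).filter
              (fun x => M₁ x = some (.pf i₀)), x = App.bc i₀ j₀ := by
            intro x hx
            have hx' := Finset.mem_filter.mp hx
            rcases Finset.mem_insert.mp hx'.1 with rfl | hav
            · rfl
            · exfalso
              rw [Finset.mem_singleton.mp hav] at hx'
              have h := hx'.2
              rw [hv2] at h; injection h with h; cases h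
          intro x hx y hy
          rw [key x hx, key y hy]
        · refine le_trans (fcard_le ?_) (hF.2.2.2.2.2.2.2.2 i₀ j₀ hij₀)
          intro x hx h
          by_cases hx1 : x = App.bc i j
          · subst hx1; rw [hv1] at h; injection h with h; injection h with h
            exact absurd h.symm hi
          by_cases hx2 : x = App.bv i
          · subst hx2; rw [hv2] at h; injection h with h; cases h
          by_cases hx3 : x = App.av i
          · subst hx3; rw [hv3] at h; cases h
          · rwa [hch x hx1 hx2 hx3] at h
    · apply beats {App.av i} {App.bc i j, App.bv i}
      · intro x hx
        by_cases hx3 : x = App.av i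
        · simp [hx3]
        exfalso
        by_cases hx1 : x = App.bc i j
        · subst hx1; exact not_prefers_of_none h0 hx
        by_cases hx2 : x = App.bv i
        · subst hx2; exact not_prefers_of_better hbf hv2 hx
        · exact not_prefers_of_eq (hch x hx1 hx2 hx3).symm hx
      · intro x hx
        rcases Finset.mem_insert.mp hx with rfl | hx
        · exact prefers_of_unmatched hv1 h0
        · rw [Finset.mem_singleton.mp hx]
          exact prefers_of_gain hv2 hbf
      · rw [Finset.card_singleton, Finset.card_insert_of_notMem (by simp),
          Finset.card_singleton]
        omega
  -- case ¬αt : directly insert a_{ij} into p_i^t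
  · set M₁ : App n m → Option (Post n m) :=
      fun x => if x = App.bc i j then some (Post.pf i) else M x with hd
    have hv1 : M₁ (App.bc i j) = some (Post.pf i) := by simp [hd]
    have hch : ∀ x, x ≠ App.bc i j → M₁ x = M x := by
      intro x hx; simp only [hd, if_neg hx]
    have hM₁ : IsMatching Cl M₁ := by
      intro x p h
      by_cases hx : x = App.bc i j
      · subst hx; rw [hv1] at h; injection h with h; subst h
        exact ⟨hij, Or.inr rfl⟩
      · rw [hch x hx] at h; exact hM x p h
    have himp_pc : ∀ (j' : Fin m) (x : App n m),
        M₁ x = some (.pc j') → M x = some (.pc j') := by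
      intro j' x h
      by_cases hx : x = App.bc i j
      · subst hx; rw [hv1] at h; injection h with h; cases h
      · rwa [hch x hx] at h
    refine hpop M₁ hM₁ ?_ ?_
    · apply feasible_of_classes hM₁ h3 hocc
      · rintro i₀ ⟨ha', hb'⟩
        rw [hch _ (by simp)] at ha'
        rw [hch _ (by simp)] at hb'
        exact not_both (hF.1 i₀) ha' hb' (by simp)
      · intro j₀ i₀ hi₀
        exact le_trans (fcard_le (fun x _ h => himp_pc j₀ x h)) (hF.2.2.1 j₀ i₀ hi₀)
      · intro j₀
        exact le_trans (fcard_le (fun i' _ h => himp_pc j₀ _ h)) (hF.2.2.2.1 j₀)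
      · intro j₀
        exact le_trans (fcard_le (fun i' _ h => himp_pc j₀ _ h)) (hF.2.2.2.2.1 j₀)
      · intro i₀ j₀ hij₀
        refine le_trans (fcard_le ?_) (hF.2.2.2.2.2.2.1 i₀ j₀ hij₀)
        intro x hx h
        by_cases hx1 : x = App.bc i j
        · subst hx1; rw [hv1] at h; injection h with h; cases h
        · rwa [hch x hx1] at h
      · intro i₀ j₀ hij₀
        by_cases hcase : i₀ = i ∧ j₀ = j
        · obtain ⟨rfl, rfl⟩ := hcase
          apply Finset.card_le_one.mpr
          have key : ∀ x ∈ ({App.bc i₀ j₀, App.bv i₀} : Finset (App n m)).filter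
              (fun x => M₁ x = some (.pf i₀)), x = App.bc i₀ j₀ := by
            intro x hx
            have hx' := Finset.mem_filter.mp hx
            rcases Finset.mem_insert.mp hx'.1 with rfl | hav
            · rfl
            · exfalso
              rw [Finset.mem_singleton.mp hav] at hx'
              have := hx'.2
              rw [hch _ (by simp)] at this
              exact hbf this
          intro x hx y hy
          rw [key x hx, key y hy]
        · refine le_trans (fcard_le ?_) (hF.2.2.2.2.2.2.2.2 i₀ j₀ hij₀)
          intro x hx h
          by_cases hx1 : x = App.bc i j
          · exfalso
            subst hx1; rw [hv1] at h; injection h with h; injection h with h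
            subst h
            rcases Finset.mem_insert.mp hx with heq | heq
            · injection heq with h1 h2; exact hcase ⟨rfl, h2.symm⟩
            · rw [Finset.mem_singleton] at heq; cases heq
          · rwa [hch x hx1] at h
    · apply beats ∅ {App.bc i j}
      · intro x hx
        exfalso
        by_cases hx1 : x = App.bc i j
        · subst hx1; exact not_prefers_of_none h0 hx
        · exact not_prefers_of_eq (hch x hx1).symm hx
      · intro x hx
        rw [Finset.mem_singleton.mp hx]
        exact prefers_of_unmatched hv1 h0
      · simp

end Red
namespace Red

variable {n m : ℕ} {Cl : Fin m → Finset (Fin n)} {M : App n m → Option (Post n m)}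

/-- in a popular matching, the pair `a_{ij}, b_{ij}` cannot both be at their
second choices -/
lemma G3 (h3 : ∀ j, (Cl j).card = 3) (hocc : ∀ i, ∃ j, i ∈ Cl j)
    (hM : IsMatching Cl M) (hF : Feasible Cl M)
    (hpop : ∀ M', IsMatching Cl M' → Feasible Cl M' → ¬ MorePopular M' M)
    {i : Fin n} {j : Fin m} (hij : i ∈ Cl j)
    (hat : M (.ac i j) = some (.pt i)) (hbf : M (.bc i j) = some (.pf i)) : False := by
  by_cases hAc : ∃ i' ∈ Cl j, M (.ac i' j) = some (.pc j)
  -- some a_{i'j} occupies p_j^c : insert b_{ij} into p_j^c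
  · obtain ⟨i', hi', hAci'⟩ := hAc
    have hii' : i' ≠ i := by
      rintro rfl; rw [hat] at hAci'; cases hAci'
    set M₁ : App n m → Option (Post n m) :=
      fun x => if x = App.bc i j then some (Post.pc j) else M x with hd
    have hv1 : M₁ (App.bc i j) = some (Post.pc j) := by simp [hd]
    have hch : ∀ x, x ≠ App.bc i j → M₁ x = M x := by
      intro x hx; simp only [hd, if_neg hx]
    have hM₁ : IsMatching Cl M₁ := by
      intro x p h
      by_cases hx : x = App.bc i j
      · subst hx; rw [hv1] at h; injection h with h; subst h
        exact ⟨hij, Or.inl rfl⟩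
      · rw [hch x hx] at h; exact hM x p h
    refine hpop M₁ hM₁ ?_ ?_
    · apply feasible_of_classes hM₁ h3 hocc
      · rintro i₀ ⟨ha', hb'⟩
        rw [hch _ (by simp)] at ha'
        rw [hch _ (by simp)] at hb'
        exact not_both (hF.1 i₀) ha' hb' (by simp)
      · intro j₀ i₀ hi₀
        by_cases hcase : i₀ = i ∧ j₀ = j
        · obtain ⟨rfl, rfl⟩ := hcase
          apply Finset.card_le_one.mpr
          have key : ∀ x ∈ ({App.ac i₀ j₀, App.bc i₀ j₀} : Finset (App n m)).filter
              (fun x => M₁ x = some (.pc j₀)), x = App.bc i₀ j₀ := by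
            intro x hx
            have hx' := Finset.mem_filter.mp hx
            rcases Finset.mem_insert.mp hx'.1 with rfl | hbc
            · exfalso
              have h := hx'.2
              rw [hch _ (by simp)] at h
              rw [hat] at h; cases h
            · exact Finset.mem_singleton.mp hbc
          intro x hx y hy
          rw [key x hx, key y hy]
        · refine le_trans (fcard_le ?_) (hF.2.2.1 j₀ i₀ hi₀)
          intro x hx h
          by_cases hx1 : x = App.bc i j
          · exfalso
            subst hx1; rw [hv1] at h; injection h with h; injection h with h
            subst h
            rcases Finset.mem_insert.mp hx with heq | heq
            · cases heq
            · rw [Finset.mem_singleton] at heq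
              injection heq with h1 h2; exact hcase ⟨h1.symm, rfl⟩
          · rwa [hch x hx1] at h
      · intro j₀
        refine le_trans (fcard_le ?_) (hF.2.2.2.1 j₀)
        intro i₀ _ h
        rwa [hch _ (by simp)] at h
      · intro j₀
        by_cases hj : j₀ = j
        · subst hj
          have hsub : ((Cl j₀).filter fun i₀ => M₁ (.bc i₀ j₀) = some (.pc j₀)) ⊆
              insert i (((Cl j₀).erase i).erase i') := by
            intro i₀ hmem
            have hmem' := Finset.mem_filter.mp hmem
            by_cases hi0 : i₀ = i
            · subst hi0; exact Finset.mem_insert_self _ _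
            · have hMv : M (.bc i₀ j₀) = some (.pc j₀) := by
                rw [← hch _ (by simp [hi0])]; exact hmem'.2
              have hne' : i₀ ≠ i' := by
                rintro rfl
                exact not_both_mem (hF.2.2.1 j₀ i₀ hi') (by simp) (by simp) (by simp)
                  hAci' hMv
              exact Finset.mem_insert.mpr (Or.inr (Finset.mem_erase.mpr
                ⟨hne', Finset.mem_erase.mpr ⟨hi0, hmem'.1⟩⟩))
          calc ((Cl j₀).filter fun i₀ => M₁ (.bc i₀ j₀) = some (.pc j₀)).card
              ≤ (insert i (((Cl j₀).erase i).erase i')).card := Finset.card_le_card hsub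
            _ ≤ (((Cl j₀).erase i).erase i').card + 1 := Finset.card_insert_le _ _
            _ ≤ 2 := by
                have h2 : ((Cl j₀).erase i).card = 2 := by
                  rw [Finset.card_erase_of_mem hij, h3 j₀]
                have h1 : (((Cl j₀).erase i).erase i').card = 1 := by
                  rw [Finset.card_erase_of_mem (Finset.mem_erase.mpr ⟨hii', hi'⟩), h2]
                omega
        · refine le_trans (fcard_le ?_) (hF.2.2.2.2.1 j₀)
          intro i₀ _ h
          by_cases hx1 : (App.bc i₀ j₀ : App n m) = App.bc i j
          · exfalso
            rw [hx1, hv1] at h; injection h with h; injection h with h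
            exact hj h.symm
          · rwa [hch _ hx1] at h
      · intro i₀ j₀ hij₀
        refine le_trans (fcard_le ?_) (hF.2.2.2.2.2.2.1 i₀ j₀ hij₀)
        intro x hx h
        by_cases hx1 : x = App.bc i j
        · subst hx1; rw [hv1] at h; injection h with h; cases h
        · rwa [hch x hx1] at h
      · intro i₀ j₀ hij₀
        refine le_trans (fcard_le ?_) (hF.2.2.2.2.2.2.2.2 i₀ j₀ hij₀)
        intro x hx h
        by_cases hx1 : x = App.bc i j
        · subst hx1; rw [hv1] at h; injection h with h; cases h
        · rwa [hch x hx1] at h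
    · apply beats ∅ {App.bc i j}
      · intro x hx
        exfalso
        by_cases hx1 : x = App.bc i j
        · subst hx1; exact not_prefers_of_better hbf hv1 hx
        · exact not_prefers_of_eq (hch x hx1).symm hx
      · intro x hx
        rw [Finset.mem_singleton.mp hx]
        exact prefers_of_gain hv1 hbf
      · simp
  -- no a occupies p_j^c : insert a_{ij} into p_j^c
  · push_neg at hAc
    set M₁ : App n m → Option (Post n m) :=
      fun x => if x = App.ac i j then some (Post.pc j) else M x with hd
    have hv1 : M₁ (App.ac i j) = some (Post.pc j) := by simp [hd]
    have hch : ∀ x, x ≠ App.ac i j → M₁ x = M x := by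
      intro x hx; simp only [hd, if_neg hx]
    have hM₁ : IsMatching Cl M₁ := by
      intro x p h
      by_cases hx : x = App.ac i j
      · subst hx; rw [hv1] at h; injection h with h; subst h
        exact ⟨hij, Or.inl rfl⟩
      · rw [hch x hx] at h; exact hM x p h
    refine hpop M₁ hM₁ ?_ ?_
    · apply feasible_of_classes hM₁ h3 hocc
      · rintro i₀ ⟨ha', hb'⟩
        rw [hch _ (by simp)] at ha'
        rw [hch _ (by simp)] at hb'
        exact not_both (hF.1 i₀) ha' hb' (by simp)
      · intro j₀ i₀ hi₀
        by_cases hcase : i₀ = i ∧ j₀ = j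
        · obtain ⟨rfl, rfl⟩ := hcase
          apply Finset.card_le_one.mpr
          have key : ∀ x ∈ ({App.ac i₀ j₀, App.bc i₀ j₀} : Finset (App n m)).filter
              (fun x => M₁ x = some (.pc j₀)), x = App.ac i₀ j₀ := by
            intro x hx
            have hx' := Finset.mem_filter.mp hx
            rcases Finset.mem_insert.mp hx'.1 with rfl | hbc
            · rfl
            · exfalso
              rw [Finset.mem_singleton.mp hbc] at hx'
              have h := hx'.2
              rw [hch _ (by simp)] at h
              rw [hbf] at h; cases h
          intro x hx y hy
          rw [key x hx, key y hy]
        · refine le_trans (fcard_le ?_) (hF.2.2.1 j₀ i₀ hi₀)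
          intro x hx h
          by_cases hx1 : x = App.ac i j
          · exfalso
            subst hx1; rw [hv1] at h; injection h with h; injection h with h
            subst h
            rcases Finset.mem_insert.mp hx with heq | heq
            · injection heq with h1 h2; exact hcase ⟨h1.symm, rfl⟩
            · rw [Finset.mem_singleton] at heq; cases heq
          · rwa [hch x hx1] at h
      · intro j₀
        by_cases hj : j₀ = j
        · subst hj
          apply Finset.card_le_one.mpr
          have key : ∀ i₀ ∈ ((Cl j₀).filter fun i₀ => M₁ (.ac i₀ j₀) = some (.pc j₀)),
              i₀ = i := by
            intro i₀ hmem
            have hmem' := Finset.mem_filter.mp hmem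
            by_cases hi0 : i₀ = i
            · exact hi0
            · exfalso
              have hMv : M (.ac i₀ j₀) = some (.pc j₀) := by
                rw [← hch _ (by simp [hi0])]; exact hmem'.2
              exact hAc i₀ hmem'.1 hMv
          intro x hx y hy
          rw [key x hx, key y hy]
        · refine le_trans (fcard_le ?_) (hF.2.2.2.1 j₀)
          intro i₀ _ h
          by_cases hx1 : (App.ac i₀ j₀ : App n m) = App.ac i j
          · exfalso
            rw [hx1, hv1] at h; injection h with h; injection h with h
            exact hj h.symm
          · rwa [hch _ hx1] at h
      · intro j₀
        refine le_trans (fcard_le ?_) (hF.2.2.2.2.1 j₀)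
        intro i₀ _ h
        rwa [hch _ (by simp)] at h
      · intro i₀ j₀ hij₀
        refine le_trans (fcard_le ?_) (hF.2.2.2.2.2.2.1 i₀ j₀ hij₀)
        intro x hx h
        by_cases hx1 : x = App.ac i j
        · subst hx1; rw [hv1] at h; injection h with h; cases h
        · rwa [hch x hx1] at h
      · intro i₀ j₀ hij₀
        refine le_trans (fcard_le ?_) (hF.2.2.2.2.2.2.2.2 i₀ j₀ hij₀)
        intro x hx h
        by_cases hx1 : x = App.ac i j
        · subst hx1; rw [hv1] at h; injection h with h; cases h
        · rwa [hch x hx1] at h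
    · apply beats ∅ {App.ac i j}
      · intro x hx
        exfalso
        by_cases hx1 : x = App.ac i j
        · subst hx1; exact not_prefers_of_better hat hv1 hx
        · exact not_prefers_of_eq (hch x hx1).symm hx
      · intro x hx
        rw [Finset.mem_singleton.mp hx]
        exact prefers_of_gain hv1 hat
      · simp

end Red
namespace Red

variable {n m : ℕ} {Cl : Fin m → Finset (Fin n)} {M : App n m → Option (Post n m)}

/-- every applicant `b_i` is matched in a popular matching -/
lemma Bm (h3 : ∀ j, (Cl j).card = 3) (hocc : ∀ i, ∃ j, i ∈ Cl j)
    (hM : IsMatching Cl M) (hF : Feasible Cl M)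
    (hpop : ∀ M', IsMatching Cl M' → Feasible Cl M' → ¬ MorePopular M' M)
    (i : Fin n) : M (.bv i) ≠ none := by
  intro hb0
  have hav : M (.av i) = some (.pv i) := by
    rcases L1 h3 hocc hM hF hpop i with h | h
    · exact h
    · rw [h] at hb0; cases hb0
  classical
  set J : Finset (Fin m) :=
    Finset.univ.filter (fun j => i ∈ Cl j ∧ M (.bc i j) = some (.pf i)) with hJdef
  have hJ : ∀ j, j ∈ J ↔ (i ∈ Cl j ∧ M (.bc i j) = some (.pf i)) := by
    intro j; simp [hJdef]
  have hAc : ∀ j ∈ J, M (.ac i j) = some (.pc j) := by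
    intro j hj
    obtain ⟨hij, hbf⟩ := (hJ j).mp hj
    rcases LA h3 hocc hM hF hpop hij with h | h
    · exact h
    · exact absurd (G3 h3 hocc hM hF hpop hij h hbf) (by simp)
  have hex : ∀ j ∈ J, ∃ i', i' ∈ Cl j ∧ i' ≠ i ∧ M (.bc i' j) = some (.pc j) := by
    intro j hj
    obtain ⟨hij, hbf⟩ := (hJ j).mp hj
    obtain ⟨i', hi', hne⟩ := Finset.exists_mem_ne (by rw [h3 j]; omega) i
    rcases LB h3 hocc hM hF hpop hi' with h | h
    · exact ⟨i', hi', hne, h⟩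
    · exfalso
      rcases LA h3 hocc hM hF hpop hi' with h' | h'
      · exact not_both_mem (hF.2.2.2.1 j) hi' hij hne h' (hAc j hj)
      · exact G3 h3 hocc hM hF hpop hi' h' h
  set H : Fin m → Fin n := fun j => if hj : j ∈ J then (hex j hj).choose else i with hHdef
  have hH : ∀ j ∈ J, H j ∈ Cl j ∧ H j ≠ i ∧ M (.bc (H j) j) = some (.pc j) := by
    intro j hj
    simp only [hHdef, dif_pos hj]
    exact (hex j hj).choose_spec
  have hHt : ∀ j ∈ J, M (.ac (H j) j) = some (.pt (H j)) := by
    intro j hj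
    rcases LA h3 hocc hM hF hpop (hH j hj).1 with h | h
    · exact absurd (not_both_mem (hF.2.2.1 j (H j) (hH j hj).1) (by simp) (by simp)
        (by simp) h (hH j hj).2.2) (by simp)
    · exact h
  set M₁ : App n m → Option (Post n m) := fun x =>
    match x with
    | App.av i₀ => M (App.av i₀)
    | App.bv i₀ => if i₀ = i then some (Post.pf i) else M (App.bv i₀)
    | App.ac i₀ j₀ => if i₀ = i ∧ j₀ ∈ J then some (Post.pt i)
        else if i₀ = H j₀ ∧ j₀ ∈ J then some (Post.pc j₀) else M (App.ac i₀ j₀)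
    | App.bc i₀ j₀ => if i₀ = i ∧ j₀ ∈ J then some (Post.pc j₀)
        else if i₀ = H j₀ ∧ j₀ ∈ J then none else M (App.bc i₀ j₀)
    with hd
  have unf_bv : ∀ i₀, M₁ (.bv i₀) =
      (if i₀ = i then some (Post.pf i) else M (App.bv i₀)) := fun _ => rfl
  have unf_ac : ∀ i₀ j₀, M₁ (.ac i₀ j₀) =
      (if i₀ = i ∧ j₀ ∈ J then some (Post.pt i)
        else if i₀ = H j₀ ∧ j₀ ∈ J then some (Post.pc j₀) else M (App.ac i₀ j₀)) :=
    fun _ _ => rfl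
  have unf_bc : ∀ i₀ j₀, M₁ (.bc i₀ j₀) =
      (if i₀ = i ∧ j₀ ∈ J then some (Post.pc j₀)
        else if i₀ = H j₀ ∧ j₀ ∈ J then none else M (App.bc i₀ j₀)) :=
    fun _ _ => rfl
  have hv_av : ∀ i₀, M₁ (.av i₀) = M (.av i₀) := fun _ => rfl
  have hv_bv : M₁ (.bv i) = some (.pf i) := by rw [unf_bv, if_pos rfl]
  have hv_bv' : ∀ i₀, i₀ ≠ i → M₁ (.bv i₀) = M (.bv i₀) := by
    intro i₀ h0; rw [unf_bv, if_neg h0]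
  have hv_ac1 : ∀ j₀ ∈ J, M₁ (.ac i j₀) = some (.pt i) := by
    intro j₀ hj; rw [unf_ac, if_pos ⟨rfl, hj⟩]
  have hv_ac2 : ∀ j₀ ∈ J, M₁ (.ac (H j₀) j₀) = some (.pc j₀) := by
    intro j₀ hj
    rw [unf_ac, if_neg (fun hc => (hH j₀ hj).2.1 hc.1), if_pos ⟨rfl, hj⟩]
  have hv_ac0 : ∀ i₀ j₀, ¬ (i₀ = i ∧ j₀ ∈ J) → ¬ (i₀ = H j₀ ∧ j₀ ∈ J) →
      M₁ (.ac i₀ j₀) = M (.ac i₀ j₀) := by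
    intro i₀ j₀ h1 h2; rw [unf_ac, if_neg h1, if_neg h2]
  have hv_bc1 : ∀ j₀ ∈ J, M₁ (.bc i j₀) = some (.pc j₀) := by
    intro j₀ hj; rw [unf_bc, if_pos ⟨rfl, hj⟩]
  have hv_bc2 : ∀ j₀ ∈ J, M₁ (.bc (H j₀) j₀) = none := by
    intro j₀ hj
    rw [unf_bc, if_neg (fun hc => (hH j₀ hj).2.1 hc.1), if_pos ⟨rfl, hj⟩]
  have hv_bc0 : ∀ i₀ j₀, ¬ (i₀ = i ∧ j₀ ∈ J) → ¬ (i₀ = H j₀ ∧ j₀ ∈ J) →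
      M₁ (.bc i₀ j₀) = M (.bc i₀ j₀) := by
    intro i₀ j₀ h1 h2; rw [unf_bc, if_neg h1, if_neg h2]
  have hM₁ : IsMatching Cl M₁ := by
    intro x p h
    cases x with
    | av i₀ => rw [hv_av] at h; exact hM _ _ h
    | bv i₀ =>
        by_cases hi0 : i₀ = i
        · subst hi0; rw [hv_bv] at h; injection h with h; subst h
          exact ⟨trivial, Or.inr rfl⟩
        · rw [hv_bv' _ hi0] at h; exact hM _ _ h
    | ac i₀ j₀ =>
        by_cases c1 : i₀ = i ∧ j₀ ∈ J
        · obtain ⟨rfl, hj⟩ := c1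
          rw [hv_ac1 _ hj] at h; injection h with h; subst h
          exact ⟨((hJ j₀).mp hj).1, Or.inr rfl⟩
        · by_cases c2 : i₀ = H j₀ ∧ j₀ ∈ J
          · obtain ⟨rfl, hj⟩ := c2
            rw [hv_ac2 _ hj] at h; injection h with h; subst h
            exact ⟨(hH j₀ hj).1, Or.inl rfl⟩
          · rw [hv_ac0 _ _ c1 c2] at h; exact hM _ _ h
    | bc i₀ j₀ =>
        by_cases c1 : i₀ = i ∧ j₀ ∈ J
        · obtain ⟨rfl, hj⟩ := c1
          rw [hv_bc1 _ hj] at h; injection h with h; subst h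
          exact ⟨((hJ j₀).mp hj).1, Or.inl rfl⟩
        · by_cases c2 : i₀ = H j₀ ∧ j₀ ∈ J
          · obtain ⟨rfl, hj⟩ := c2
            rw [hv_bc2 _ hj] at h; cases h
          · rw [hv_bc0 _ _ c1 c2] at h; exact hM _ _ h
  refine hpop M₁ hM₁ ?_ ?_
  · apply feasible_of_classes hM₁ h3 hocc
    -- pv pairs
    · rintro i₀ ⟨ha', hb'⟩
      rw [hv_av] at ha'
      by_cases hi0 : i₀ = i
      · subst hi0; rw [hv_bv] at hb'; injection hb' with hb'; cases hb'
      · rw [hv_bv' _ hi0] at hb'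
        exact not_both (hF.1 i₀) ha' hb' (by simp)
    -- pair classes S_{ij}
    · intro j₀ i₀ hi₀
      by_cases hj : j₀ ∈ J
      · by_cases hc1 : i₀ = i
        · subst hc1
          apply Finset.card_le_one.mpr
          have key : ∀ x ∈ ({App.ac i₀ j₀, App.bc i₀ j₀} : Finset (App n m)).filter
              (fun x => M₁ x = some (.pc j₀)), x = App.bc i₀ j₀ := by
            intro x hx
            have hx' := Finset.mem_filter.mp hx
            rcases Finset.mem_insert.mp hx'.1 with rfl | hbc
            · exfalso
              have h := hx'.2
              rw [hv_ac1 _ hj] at h; injection h with h; cases h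
            · exact Finset.mem_singleton.mp hbc
          intro x hx y hy
          rw [key x hx, key y hy]
        · by_cases hc2 : i₀ = H j₀
          · subst hc2
            apply Finset.card_le_one.mpr
            have key : ∀ x ∈ ({App.ac (H j₀) j₀, App.bc (H j₀) j₀} :
                Finset (App n m)).filter
                (fun x => M₁ x = some (.pc j₀)), x = App.ac (H j₀) j₀ := by
              intro x hx
              have hx' := Finset.mem_filter.mp hx
              rcases Finset.mem_insert.mp hx'.1 with rfl | hbc
              · rfl
              · exfalso
                rw [Finset.mem_singleton.mp hbc] at hx'
                have h := hx'.2
                rw [hv_bc2 _ hj] at h; cases h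
            intro x hx y hy
            rw [key x hx, key y hy]
          · refine le_trans (fcard_le ?_) (hF.2.2.1 j₀ i₀ hi₀)
            intro x hx h
            rcases Finset.mem_insert.mp hx with rfl | hx
            · rwa [hv_ac0 _ _ (by tauto) (by tauto)] at h
            · rw [Finset.mem_singleton.mp hx] at h ⊢
              rwa [hv_bc0 _ _ (by tauto) (by tauto)] at h
      · refine le_trans (fcard_le ?_) (hF.2.2.1 j₀ i₀ hi₀)
        intro x hx h
        rcases Finset.mem_insert.mp hx with rfl | hx
        · rwa [hv_ac0 _ _ (by tauto) (by tauto)] at h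
        · rw [Finset.mem_singleton.mp hx] at h ⊢
          rwa [hv_bc0 _ _ (by tauto) (by tauto)] at h
    -- class S_{1j}
    · intro j₀
      by_cases hj : j₀ ∈ J
      · apply Finset.card_le_one.mpr
        have key : ∀ i₀ ∈ ((Cl j₀).filter fun i₀ => M₁ (.ac i₀ j₀) = some (.pc j₀)),
            i₀ = H j₀ := by
          intro i₀ hmem
          have hmem' := Finset.mem_filter.mp hmem
          by_cases hc1 : i₀ = i
          · exfalso; subst hc1
            have h := hmem'.2
            rw [hv_ac1 _ hj] at h; injection h with h; cases h
          · by_cases hc2 : i₀ = H j₀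
            · exact hc2
            · exfalso
              have h := hmem'.2
              rw [hv_ac0 _ _ (by tauto) (by tauto)] at h
              exact not_both_mem (hF.2.2.2.1 j₀) hmem'.1 ((hJ j₀).mp hj).1 hc1 h
                (hAc j₀ hj)
        intro x hx y hy
        rw [key x hx, key y hy]
      · refine le_trans (fcard_le ?_) (hF.2.2.2.1 j₀)
        intro i₀ _ h
        rwa [hv_ac0 _ _ (by tauto) (by tauto)] at h
    -- class S_{2j}
    · intro j₀
      by_cases hj : j₀ ∈ J
      · have hHmem : H j₀ ∈ (Cl j₀).filter (fun i₀ => M (.bc i₀ j₀) = some (.pc j₀)) :=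
          Finset.mem_filter.mpr ⟨(hH j₀ hj).1, (hH j₀ hj).2.2⟩
        have hsub : ((Cl j₀).filter fun i₀ => M₁ (.bc i₀ j₀) = some (.pc j₀)) ⊆
            insert i (((Cl j₀).filter fun i₀ => M (.bc i₀ j₀) = some (.pc j₀)).erase
              (H j₀)) := by
          intro i₀ hmem
          have hmem' := Finset.mem_filter.mp hmem
          by_cases hc1 : i₀ = i
          · subst hc1; exact Finset.mem_insert_self _ _
          · by_cases hc2 : i₀ = H j₀
            · exfalso; subst hc2
              have h := hmem'.2
              rw [hv_bc2 _ hj] at h; cases h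
            · refine Finset.mem_insert.mpr (Or.inr (Finset.mem_erase.mpr ⟨hc2, ?_⟩))
              have h := hmem'.2
              rw [hv_bc0 _ _ (by tauto) (by tauto)] at h
              exact Finset.mem_filter.mpr ⟨hmem'.1, h⟩
        have hco : ((Cl j₀).filter fun i₀ => M (.bc i₀ j₀) = some (.pc j₀)).card ≤ 2 :=
          hF.2.2.2.2.1 j₀
        have hpos : 1 ≤ ((Cl j₀).filter fun i₀ => M (.bc i₀ j₀) = some (.pc j₀)).card :=
          Finset.card_pos.mpr ⟨H j₀, hHmem⟩
        calc ((Cl j₀).filter fun i₀ => M₁ (.bc i₀ j₀) = some (.pc j₀)).card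
            ≤ _ := Finset.card_le_card hsub
          _ ≤ (((Cl j₀).filter fun i₀ => M (.bc i₀ j₀) = some (.pc j₀)).erase
              (H j₀)).card + 1 := Finset.card_insert_le _ _
          _ ≤ 2 := by rw [Finset.card_erase_of_mem hHmem]; omega
      · refine le_trans (fcard_le ?_) (hF.2.2.2.2.1 j₀)
        intro i₀ _ h
        rwa [hv_bc0 _ _ (by tauto) (by tauto)] at h
    -- classes S_j^t
    · intro i₀ j₀ hij₀
      by_cases hi0 : i₀ = i
      · subst hi0
        apply Finset.card_le_one.mpr
        have key : ∀ x ∈ ({App.ac i₀ j₀, App.av i₀} : Finset (App n m)).filter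
            (fun x => M₁ x = some (.pt i₀)), x = App.ac i₀ j₀ := by
          intro x hx
          have hx' := Finset.mem_filter.mp hx
          rcases Finset.mem_insert.mp hx'.1 with rfl | hav'
          · rfl
          · exfalso
            rw [Finset.mem_singleton.mp hav'] at hx'
            have h := hx'.2
            rw [hv_av, hav] at h; injection h with h; cases h
        intro x hx y hy
        rw [key x hx, key y hy]
      · refine le_trans (fcard_le ?_) (hF.2.2.2.2.2.2.1 i₀ j₀ hij₀)
        intro x hx h
        rcases Finset.mem_insert.mp hx with rfl | hx
        · by_cases c2 : i₀ = H j₀ ∧ j₀ ∈ J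
          · exfalso
            obtain ⟨rfl, hj⟩ := c2
            rw [hv_ac2 _ hj] at h; injection h with h; cases h
          · rwa [hv_ac0 _ _ (by tauto) c2] at h
        · rw [Finset.mem_singleton.mp hx] at h ⊢
          rwa [hv_av] at h
    -- classes S_j^f
    · intro i₀ j₀ hij₀
      by_cases hi0 : i₀ = i
      · subst hi0
        apply Finset.card_le_one.mpr
        have key : ∀ x ∈ ({App.bc i₀ j₀, App.bv i₀} : Finset (App n m)).filter
            (fun x => M₁ x = some (.pf i₀)), x = App.bv i₀ := by
          intro x hx
          have hx' := Finset.mem_filter.mp hx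
          rcases Finset.mem_insert.mp hx'.1 with rfl | hbv'
          · exfalso
            have h := hx'.2
            by_cases hj : j₀ ∈ J
            · rw [hv_bc1 _ hj] at h; injection h with h; cases h
            · rw [hv_bc0 _ _ (by tauto) (by
                rintro ⟨h1, hj'⟩; exact hj hj')] at h
              exact hj ((hJ j₀).mpr ⟨hij₀, h⟩)
          · exact Finset.mem_singleton.mp hbv'
        intro x hx y hy
        rw [key x hx, key y hy]
      · refine le_trans (fcard_le ?_) (hF.2.2.2.2.2.2.2.2 i₀ j₀ hij₀)
        intro x hx h
        rcases Finset.mem_insert.mp hx with rfl | hx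
        · by_cases c2 : i₀ = H j₀ ∧ j₀ ∈ J
          · exfalso
            obtain ⟨rfl, hj⟩ := c2
            rw [hv_bc2 _ hj] at h; cases h
          · rwa [hv_bc0 _ _ (by tauto) c2] at h
        · rw [Finset.mem_singleton.mp hx] at h ⊢
          rwa [hv_bv' _ hi0] at h
  -- the vote count
  · apply beats ((J.image fun j₀ => App.ac i j₀) ∪ (J.image fun j₀ => App.bc (H j₀) j₀))
      (insert (App.bv i) ((J.image fun j₀ => App.bc i j₀) ∪
        (J.image fun j₀ => App.ac (H j₀) j₀)))
    · intro x hx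
      cases x with
      | av i₀ => exact absurd hx (not_prefers_of_eq (hv_av i₀).symm)
      | bv i₀ =>
          exfalso
          by_cases hi0 : i₀ = i
          · subst hi0; exact not_prefers_of_none hb0 hx
          · exact not_prefers_of_eq (hv_bv' _ hi0).symm hx
      | ac i₀ j₀ =>
          by_cases c1 : i₀ = i ∧ j₀ ∈ J
          · obtain ⟨rfl, hj⟩ := c1
            exact Finset.mem_union_left _ (Finset.mem_image.mpr ⟨j₀, hj, rfl⟩)
          · by_cases c2 : i₀ = H j₀ ∧ j₀ ∈ J
            · exfalso
              obtain ⟨rfl, hj⟩ := c2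
              exact not_prefers_of_better (hHt j₀ hj) (hv_ac2 _ hj) hx
            · exact absurd hx (not_prefers_of_eq (hv_ac0 _ _ c1 c2).symm)
      | bc i₀ j₀ =>
          by_cases c1 : i₀ = i ∧ j₀ ∈ J
          · obtain ⟨rfl, hj⟩ := c1
            exfalso
            exact not_prefers_of_better ((hJ j₀).mp hj).2 (hv_bc1 _ hj) hx
          · by_cases c2 : i₀ = H j₀ ∧ j₀ ∈ J
            · obtain ⟨rfl, hj⟩ := c2
              exact Finset.mem_union_right _ (Finset.mem_image.mpr ⟨j₀, hj, rfl⟩)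
            · exact absurd hx (not_prefers_of_eq (hv_bc0 _ _ c1 c2).symm)
    · intro x hx
      rcases Finset.mem_insert.mp hx with rfl | hx
      · exact prefers_of_unmatched hv_bv hb0
      · rcases Finset.mem_union.mp hx with hx | hx
        · obtain ⟨j₀, hj, rfl⟩ := Finset.mem_image.mp hx
          exact prefers_of_gain (hv_bc1 _ hj) ((hJ j₀).mp hj).2
        · obtain ⟨j₀, hj, rfl⟩ := Finset.mem_image.mp hx
          exact prefers_of_gain (hv_ac2 _ hj) (hHt j₀ hj)
    · have hinj1 : Function.Injective (fun j₀ => (App.ac i j₀ : App n m)) := by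
        intro a b h; injection h
      have hinj2 : Function.Injective (fun j₀ => (App.bc (H j₀) j₀ : App n m)) := by
        intro a b h; injection h
      have hinj3 : Function.Injective (fun j₀ => (App.bc i j₀ : App n m)) := by
        intro a b h; injection h
      have hinj4 : Function.Injective (fun j₀ => (App.ac (H j₀) j₀ : App n m)) := by
        intro a b h; injection h
      have hd1 : Disjoint (J.image fun j₀ => (App.ac i j₀ : App n m))
          (J.image fun j₀ => App.bc (H j₀) j₀) := by
        rw [Finset.disjoint_left]
        rintro a ha hb
        obtain ⟨j₁, -, rfl⟩ := Finset.mem_image.mp ha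
        obtain ⟨j₂, -, hh⟩ := Finset.mem_image.mp hb
        cases hh
      have hd2 : Disjoint (J.image fun j₀ => (App.bc i j₀ : App n m))
          (J.image fun j₀ => App.ac (H j₀) j₀) := by
        rw [Finset.disjoint_left]
        rintro a ha hb
        obtain ⟨j₁, -, rfl⟩ := Finset.mem_image.mp ha
        obtain ⟨j₂, -, hh⟩ := Finset.mem_image.mp hb
        cases hh
      have hnm : (App.bv i : App n m) ∉ (J.image fun j₀ => App.bc i j₀) ∪
          (J.image fun j₀ => App.ac (H j₀) j₀) := by
        rw [Finset.mem_union]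
        rintro (hx | hx) <;>
          · obtain ⟨j₁, -, hh⟩ := Finset.mem_image.mp hx
            cases hh
      calc ((J.image fun j₀ => (App.ac i j₀ : App n m)) ∪
            (J.image fun j₀ => App.bc (H j₀) j₀)).card
          ≤ (J.image fun j₀ => (App.ac i j₀ : App n m)).card +
            (J.image fun j₀ => (App.bc (H j₀) j₀ : App n m)).card :=
            Finset.card_union_le _ _
        _ ≤ J.card + J.card := add_le_add Finset.card_image_le Finset.card_image_le
        _ < J.card + J.card + 1 := by omega
        _ = _ := by
            rw [Finset.card_insert_of_notMem hnm, Finset.card_union_of_disjoint hd2,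
              Finset.card_image_of_injective _ hinj3,
              Finset.card_image_of_injective _ hinj4]

end Red
namespace Red

variable {n m : ℕ} {Cl : Fin m → Finset (Fin n)} {M : App n m → Option (Post n m)}

/-- every applicant `a_i` is matched in a popular matching -/
lemma Am (h3 : ∀ j, (Cl j).card = 3) (hocc : ∀ i, ∃ j, i ∈ Cl j)
    (hM : IsMatching Cl M) (hF : Feasible Cl M)
    (hpop : ∀ M', IsMatching Cl M' → Feasible Cl M' → ¬ MorePopular M' M)
    (i : Fin n) : M (.av i) ≠ none := by
  intro hb0
  have hav : M (.bv i) = some (.pv i) := by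
    rcases L1 h3 hocc hM hF hpop i with h | h
    · rw [h] at hb0; cases hb0
    · exact h
  classical
  set J : Finset (Fin m) :=
    Finset.univ.filter (fun j => i ∈ Cl j ∧ M (.ac i j) = some (.pt i)) with hJdef
  have hJ : ∀ j, j ∈ J ↔ (i ∈ Cl j ∧ M (.ac i j) = some (.pt i)) := by
    intro j; simp [hJdef]
  have hAc : ∀ j ∈ J, M (.bc i j) = some (.pc j) := by
    intro j hj
    obtain ⟨hij, hat⟩ := (hJ j).mp hj
    rcases LB h3 hocc hM hF hpop hij with h | h
    · exact h
    · exact absurd (G3 h3 hocc hM hF hpop hij hat h) (by simp)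
  have hex : ∀ j ∈ J, ∃ i', i' ∈ Cl j ∧ i' ≠ i ∧ M (.ac i' j) = some (.pc j) := by
    intro j hj
    obtain ⟨hij, hat⟩ := (hJ j).mp hj
    by_contra hno
    push_neg at hno
    have hall : ∀ i' ∈ Cl j, M (.bc i' j) = some (.pc j) := by
      intro i' hi'
      by_cases hii : i' = i
      · subst hii; exact hAc j hj
      · rcases LB h3 hocc hM hF hpop hi' with h | h
        · exact h
        · exfalso
          rcases LA h3 hocc hM hF hpop hi' with h' | h'
          · exact hno i' hi' hii h'
          · exact G3 h3 hocc hM hF hpop hi' h' h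
    have heq : ((Cl j).filter fun i' => M (.bc i' j) = some (.pc j)) = Cl j :=
      Finset.filter_true_of_mem hall
    have h2 := hF.2.2.2.2.1 j
    rw [heq, h3 j] at h2
    omega
  set H : Fin m → Fin n := fun j => if hj : j ∈ J then (hex j hj).choose else i with hHdef
  have hH : ∀ j ∈ J, H j ∈ Cl j ∧ H j ≠ i ∧ M (.ac (H j) j) = some (.pc j) := by
    intro j hj
    simp only [hHdef, dif_pos hj]
    exact (hex j hj).choose_spec
  have hHt : ∀ j ∈ J, M (.bc (H j) j) = some (.pf (H j)) := by
    intro j hj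
    rcases LB h3 hocc hM hF hpop (hH j hj).1 with h | h
    · exact absurd (not_both_mem (hF.2.2.1 j (H j) (hH j hj).1) (by simp) (by simp)
        (by simp) (hH j hj).2.2 h) (by simp)
    · exact h
  set M₁ : App n m → Option (Post n m) := fun x =>
    match x with
    | App.bv i₀ => M (App.bv i₀)
    | App.av i₀ => if i₀ = i then some (Post.pt i) else M (App.av i₀)
    | App.bc i₀ j₀ => if i₀ = i ∧ j₀ ∈ J then some (Post.pf i)
        else if i₀ = H j₀ ∧ j₀ ∈ J then some (Post.pc j₀) else M (App.bc i₀ j₀)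
    | App.ac i₀ j₀ => if i₀ = i ∧ j₀ ∈ J then some (Post.pc j₀)
        else if i₀ = H j₀ ∧ j₀ ∈ J then none else M (App.ac i₀ j₀)
    with hd
  have unf_bv : ∀ i₀, M₁ (.av i₀) =
      (if i₀ = i then some (Post.pt i) else M (App.av i₀)) := fun _ => rfl
  have unf_ac : ∀ i₀ j₀, M₁ (.bc i₀ j₀) =
      (if i₀ = i ∧ j₀ ∈ J then some (Post.pf i)
        else if i₀ = H j₀ ∧ j₀ ∈ J then some (Post.pc j₀) else M (App.bc i₀ j₀)) :=
    fun _ _ => rfl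
  have unf_bc : ∀ i₀ j₀, M₁ (.ac i₀ j₀) =
      (if i₀ = i ∧ j₀ ∈ J then some (Post.pc j₀)
        else if i₀ = H j₀ ∧ j₀ ∈ J then none else M (App.ac i₀ j₀)) :=
    fun _ _ => rfl
  have hv_av : ∀ i₀, M₁ (.bv i₀) = M (.bv i₀) := fun _ => rfl
  have hv_bv : M₁ (.av i) = some (.pt i) := by rw [unf_bv, if_pos rfl]
  have hv_bv' : ∀ i₀, i₀ ≠ i → M₁ (.av i₀) = M (.av i₀) := by
    intro i₀ h0; rw [unf_bv, if_neg h0]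
  have hv_ac1 : ∀ j₀ ∈ J, M₁ (.bc i j₀) = some (.pf i) := by
    intro j₀ hj; rw [unf_ac, if_pos ⟨rfl, hj⟩]
  have hv_ac2 : ∀ j₀ ∈ J, M₁ (.bc (H j₀) j₀) = some (.pc j₀) := by
    intro j₀ hj
    rw [unf_ac, if_neg (fun hc => (hH j₀ hj).2.1 hc.1), if_pos ⟨rfl, hj⟩]
  have hv_ac0 : ∀ i₀ j₀, ¬ (i₀ = i ∧ j₀ ∈ J) → ¬ (i₀ = H j₀ ∧ j₀ ∈ J) →
      M₁ (.bc i₀ j₀) = M (.bc i₀ j₀) := by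
    intro i₀ j₀ h1 h2; rw [unf_ac, if_neg h1, if_neg h2]
  have hv_bc1 : ∀ j₀ ∈ J, M₁ (.ac i j₀) = some (.pc j₀) := by
    intro j₀ hj; rw [unf_bc, if_pos ⟨rfl, hj⟩]
  have hv_bc2 : ∀ j₀ ∈ J, M₁ (.ac (H j₀) j₀) = none := by
    intro j₀ hj
    rw [unf_bc, if_neg (fun hc => (hH j₀ hj).2.1 hc.1), if_pos ⟨rfl, hj⟩]
  have hv_bc0 : ∀ i₀ j₀, ¬ (i₀ = i ∧ j₀ ∈ J) → ¬ (i₀ = H j₀ ∧ j₀ ∈ J) →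
      M₁ (.ac i₀ j₀) = M (.ac i₀ j₀) := by
    intro i₀ j₀ h1 h2; rw [unf_bc, if_neg h1, if_neg h2]
  have hM₁ : IsMatching Cl M₁ := by
    intro x p h
    cases x with
    | bv i₀ => rw [hv_av] at h; exact hM _ _ h
    | av i₀ =>
        by_cases hi0 : i₀ = i
        · subst hi0; rw [hv_bv] at h; injection h with h; subst h
          exact ⟨trivial, Or.inr rfl⟩
        · rw [hv_bv' _ hi0] at h; exact hM _ _ h
    | bc i₀ j₀ =>
        by_cases c1 : i₀ = i ∧ j₀ ∈ J
        · obtain ⟨rfl, hj⟩ := c1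
          rw [hv_ac1 _ hj] at h; injection h with h; subst h
          exact ⟨((hJ j₀).mp hj).1, Or.inr rfl⟩
        · by_cases c2 : i₀ = H j₀ ∧ j₀ ∈ J
          · obtain ⟨rfl, hj⟩ := c2
            rw [hv_ac2 _ hj] at h; injection h with h; subst h
            exact ⟨(hH j₀ hj).1, Or.inl rfl⟩
          · rw [hv_ac0 _ _ c1 c2] at h; exact hM _ _ h
    | ac i₀ j₀ =>
        by_cases c1 : i₀ = i ∧ j₀ ∈ J
        · obtain ⟨rfl, hj⟩ := c1
          rw [hv_bc1 _ hj] at h; injection h with h; subst h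
          exact ⟨((hJ j₀).mp hj).1, Or.inl rfl⟩
        · by_cases c2 : i₀ = H j₀ ∧ j₀ ∈ J
          · obtain ⟨rfl, hj⟩ := c2
            rw [hv_bc2 _ hj] at h; cases h
          · rw [hv_bc0 _ _ c1 c2] at h; exact hM _ _ h
  refine hpop M₁ hM₁ ?_ ?_
  · apply feasible_of_classes hM₁ h3 hocc
    -- pv pairs
    · rintro i₀ ⟨ha', hb'⟩
      rw [hv_av] at hb'
      by_cases hi0 : i₀ = i
      · subst hi0; rw [hv_bv] at ha'; injection ha' with ha'; cases ha'
      · rw [hv_bv' _ hi0] at ha'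
        exact not_both (hF.1 i₀) ha' hb' (by simp)
    -- pair classes S_{ij}
    · intro j₀ i₀ hi₀
      by_cases hj : j₀ ∈ J
      · by_cases hc1 : i₀ = i
        · subst hc1
          apply Finset.card_le_one.mpr
          have key : ∀ x ∈ ({App.ac i₀ j₀, App.bc i₀ j₀} : Finset (App n m)).filter
              (fun x => M₁ x = some (.pc j₀)), x = App.ac i₀ j₀ := by
            intro x hx
            have hx' := Finset.mem_filter.mp hx
            rcases Finset.mem_insert.mp hx'.1 with rfl | hbc
            · rfl
            · exfalso
              rw [Finset.mem_singleton.mp hbc] at hx'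
              have h := hx'.2
              rw [hv_ac1 _ hj] at h; injection h with h; cases h
          intro x hx y hy
          rw [key x hx, key y hy]
        · by_cases hc2 : i₀ = H j₀
          · subst hc2
            apply Finset.card_le_one.mpr
            have key : ∀ x ∈ ({App.ac (H j₀) j₀, App.bc (H j₀) j₀} :
                Finset (App n m)).filter
                (fun x => M₁ x = some (.pc j₀)), x = App.bc (H j₀) j₀ := by
              intro x hx
              have hx' := Finset.mem_filter.mp hx
              rcases Finset.mem_insert.mp hx'.1 with rfl | hbc
              · exfalso
                have h := hx'.2
                rw [hv_bc2 _ hj] at h; cases h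
              · exact Finset.mem_singleton.mp hbc
            intro x hx y hy
            rw [key x hx, key y hy]
          · refine le_trans (fcard_le ?_) (hF.2.2.1 j₀ i₀ hi₀)
            intro x hx h
            rcases Finset.mem_insert.mp hx with rfl | hx
            · rwa [hv_bc0 _ _ (by tauto) (by tauto)] at h
            · rw [Finset.mem_singleton.mp hx] at h ⊢
              rwa [hv_ac0 _ _ (by tauto) (by tauto)] at h
      · refine le_trans (fcard_le ?_) (hF.2.2.1 j₀ i₀ hi₀)
        intro x hx h
        rcases Finset.mem_insert.mp hx with rfl | hx
        · rwa [hv_bc0 _ _ (by tauto) (by tauto)] at h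
        · rw [Finset.mem_singleton.mp hx] at h ⊢
          rwa [hv_ac0 _ _ (by tauto) (by tauto)] at h
    -- class S_{1j}
    · intro j₀
      by_cases hj : j₀ ∈ J
      · apply Finset.card_le_one.mpr
        have key : ∀ i₀ ∈ ((Cl j₀).filter fun i₀ => M₁ (.ac i₀ j₀) = some (.pc j₀)),
            i₀ = i := by
          intro i₀ hmem
          have hmem' := Finset.mem_filter.mp hmem
          by_cases hc1 : i₀ = i
          · exact hc1
          · exfalso
            by_cases hc2 : i₀ = H j₀
            · subst hc2
              have h := hmem'.2
              rw [hv_bc2 _ hj] at h; cases h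
            · have h := hmem'.2
              rw [hv_bc0 _ _ (by tauto) (by tauto)] at h
              exact not_both_mem (hF.2.2.2.1 j₀) hmem'.1 (hH j₀ hj).1 hc2 h
                (hH j₀ hj).2.2
        intro x hx y hy
        rw [key x hx, key y hy]
      · refine le_trans (fcard_le ?_) (hF.2.2.2.1 j₀)
        intro i₀ _ h
        rwa [hv_bc0 _ _ (by tauto) (by tauto)] at h
    -- class S_{2j}
    · intro j₀
      by_cases hj : j₀ ∈ J
      · have hImem : i ∈ (Cl j₀).filter (fun i₀ => M (.bc i₀ j₀) = some (.pc j₀)) :=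
          Finset.mem_filter.mpr ⟨((hJ j₀).mp hj).1, hAc j₀ hj⟩
        have hsub : ((Cl j₀).filter fun i₀ => M₁ (.bc i₀ j₀) = some (.pc j₀)) ⊆
            insert (H j₀) (((Cl j₀).filter fun i₀ =>
              M (.bc i₀ j₀) = some (.pc j₀)).erase i) := by
          intro i₀ hmem
          have hmem' := Finset.mem_filter.mp hmem
          by_cases hc1 : i₀ = i
          · exfalso; subst hc1
            have h := hmem'.2
            rw [hv_ac1 _ hj] at h; injection h with h; cases h
          · by_cases hc2 : i₀ = H j₀
            · subst hc2; exact Finset.mem_insert_self _ _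
            · refine Finset.mem_insert.mpr (Or.inr (Finset.mem_erase.mpr ⟨hc1, ?_⟩))
              have h := hmem'.2
              rw [hv_ac0 _ _ (by tauto) (by tauto)] at h
              exact Finset.mem_filter.mpr ⟨hmem'.1, h⟩
        have hco : ((Cl j₀).filter fun i₀ => M (.bc i₀ j₀) = some (.pc j₀)).card ≤ 2 :=
          hF.2.2.2.2.1 j₀
        calc ((Cl j₀).filter fun i₀ => M₁ (.bc i₀ j₀) = some (.pc j₀)).card
            ≤ _ := Finset.card_le_card hsub
          _ ≤ (((Cl j₀).filter fun i₀ => M (.bc i₀ j₀) = some (.pc j₀)).erase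
              i).card + 1 := Finset.card_insert_le _ _
          _ ≤ 2 := by rw [Finset.card_erase_of_mem hImem]; omega
      · refine le_trans (fcard_le ?_) (hF.2.2.2.2.1 j₀)
        intro i₀ _ h
        rwa [hv_ac0 _ _ (by tauto) (by tauto)] at h
    -- classes S_j^t
    · intro i₀ j₀ hij₀
      by_cases hi0 : i₀ = i
      · subst hi0
        apply Finset.card_le_one.mpr
        have key : ∀ x ∈ ({App.ac i₀ j₀, App.av i₀} : Finset (App n m)).filter
            (fun x => M₁ x = some (.pt i₀)), x = App.av i₀ := by
          intro x hx
          have hx' := Finset.mem_filter.mp hx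
          rcases Finset.mem_insert.mp hx'.1 with rfl | hav'
          · exfalso
            have h := hx'.2
            by_cases hj : j₀ ∈ J
            · rw [hv_bc1 _ hj] at h; injection h with h; cases h
            · rw [hv_bc0 _ _ (by rintro ⟨h1, hj'⟩; exact hj hj')
                (by rintro ⟨h1, hj'⟩; exact hj hj')] at h
              exact hj ((hJ j₀).mpr ⟨hij₀, h⟩)
          · exact Finset.mem_singleton.mp hav'
        intro x hx y hy
        rw [key x hx, key y hy]
      · refine le_trans (fcard_le ?_) (hF.2.2.2.2.2.2.1 i₀ j₀ hij₀)
        intro x hx h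
        rcases Finset.mem_insert.mp hx with rfl | hx
        · by_cases c2 : i₀ = H j₀ ∧ j₀ ∈ J
          · exfalso
            obtain ⟨rfl, hj⟩ := c2
            rw [hv_bc2 _ hj] at h; cases h
          · rwa [hv_bc0 _ _ (by tauto) c2] at h
        · rw [Finset.mem_singleton.mp hx] at h ⊢
          rwa [hv_bv' _ hi0] at h
    -- classes S_j^f
    · intro i₀ j₀ hij₀
      by_cases hi0 : i₀ = i
      · subst hi0
        apply Finset.card_le_one.mpr
        have key : ∀ x ∈ ({App.bc i₀ j₀, App.bv i₀} : Finset (App n m)).filter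
            (fun x => M₁ x = some (.pf i₀)), x = App.bc i₀ j₀ := by
          intro x hx
          have hx' := Finset.mem_filter.mp hx
          rcases Finset.mem_insert.mp hx'.1 with rfl | hbv'
          · rfl
          · exfalso
            rw [Finset.mem_singleton.mp hbv'] at hx'
            have h := hx'.2
            rw [hv_av, hav] at h; injection h with h; cases h
        intro x hx y hy
        rw [key x hx, key y hy]
      · refine le_trans (fcard_le ?_) (hF.2.2.2.2.2.2.2.2 i₀ j₀ hij₀)
        intro x hx h
        rcases Finset.mem_insert.mp hx with rfl | hx
        · by_cases c2 : i₀ = H j₀ ∧ j₀ ∈ J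
          · exfalso
            obtain ⟨rfl, hj⟩ := c2
            rw [hv_ac2 _ hj] at h; injection h with h; cases h
          · rwa [hv_ac0 _ _ (by tauto) c2] at h
        · rw [Finset.mem_singleton.mp hx] at h ⊢
          rwa [hv_av] at h
  -- the vote count
  · apply beats ((J.image fun j₀ => App.bc i j₀) ∪ (J.image fun j₀ => App.ac (H j₀) j₀))
      (insert (App.av i) ((J.image fun j₀ => App.ac i j₀) ∪
        (J.image fun j₀ => App.bc (H j₀) j₀)))
    · intro x hx
      cases x with
      | bv i₀ => exact absurd hx (not_prefers_of_eq (hv_av i₀).symm)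
      | av i₀ =>
          exfalso
          by_cases hi0 : i₀ = i
          · subst hi0; exact not_prefers_of_none hb0 hx
          · exact not_prefers_of_eq (hv_bv' _ hi0).symm hx
      | bc i₀ j₀ =>
          by_cases c1 : i₀ = i ∧ j₀ ∈ J
          · obtain ⟨rfl, hj⟩ := c1
            exact Finset.mem_union_left _ (Finset.mem_image.mpr ⟨j₀, hj, rfl⟩)
          · by_cases c2 : i₀ = H j₀ ∧ j₀ ∈ J
            · exfalso
              obtain ⟨rfl, hj⟩ := c2
              exact not_prefers_of_better (hHt j₀ hj) (hv_ac2 _ hj) hx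
            · exact absurd hx (not_prefers_of_eq (hv_ac0 _ _ c1 c2).symm)
      | ac i₀ j₀ =>
          by_cases c1 : i₀ = i ∧ j₀ ∈ J
          · obtain ⟨rfl, hj⟩ := c1
            exfalso
            exact not_prefers_of_better ((hJ j₀).mp hj).2 (hv_bc1 _ hj) hx
          · by_cases c2 : i₀ = H j₀ ∧ j₀ ∈ J
            · obtain ⟨rfl, hj⟩ := c2
              exact Finset.mem_union_right _ (Finset.mem_image.mpr ⟨j₀, hj, rfl⟩)
            · exact absurd hx (not_prefers_of_eq (hv_bc0 _ _ c1 c2).symm)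
    · intro x hx
      rcases Finset.mem_insert.mp hx with rfl | hx
      · exact prefers_of_unmatched hv_bv hb0
      · rcases Finset.mem_union.mp hx with hx | hx
        · obtain ⟨j₀, hj, rfl⟩ := Finset.mem_image.mp hx
          exact prefers_of_gain (hv_bc1 _ hj) ((hJ j₀).mp hj).2
        · obtain ⟨j₀, hj, rfl⟩ := Finset.mem_image.mp hx
          exact prefers_of_gain (hv_ac2 _ hj) (hHt j₀ hj)
    · have hinj1 : Function.Injective (fun j₀ => (App.bc i j₀ : App n m)) := by
        intro a b h; injection h
      have hinj2 : Function.Injective (fun j₀ => (App.ac (H j₀) j₀ : App n m)) := by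
        intro a b h; injection h
      have hinj3 : Function.Injective (fun j₀ => (App.ac i j₀ : App n m)) := by
        intro a b h; injection h
      have hinj4 : Function.Injective (fun j₀ => (App.bc (H j₀) j₀ : App n m)) := by
        intro a b h; injection h
      have hd1 : Disjoint (J.image fun j₀ => (App.bc i j₀ : App n m))
          (J.image fun j₀ => App.ac (H j₀) j₀) := by
        rw [Finset.disjoint_left]
        rintro a ha hb
        obtain ⟨j₁, -, rfl⟩ := Finset.mem_image.mp ha
        obtain ⟨j₂, -, hh⟩ := Finset.mem_image.mp hb
        cases hh
      have hd2 : Disjoint (J.image fun j₀ => (App.ac i j₀ : App n m))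
          (J.image fun j₀ => App.bc (H j₀) j₀) := by
        rw [Finset.disjoint_left]
        rintro a ha hb
        obtain ⟨j₁, -, rfl⟩ := Finset.mem_image.mp ha
        obtain ⟨j₂, -, hh⟩ := Finset.mem_image.mp hb
        cases hh
      have hnm : (App.av i : App n m) ∉ (J.image fun j₀ => App.ac i j₀) ∪
          (J.image fun j₀ => App.bc (H j₀) j₀) := by
        rw [Finset.mem_union]
        rintro (hx | hx) <;>
          · obtain ⟨j₁, -, hh⟩ := Finset.mem_image.mp hx
            cases hh
      calc ((J.image fun j₀ => (App.bc i j₀ : App n m)) ∪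
            (J.image fun j₀ => App.ac (H j₀) j₀)).card
          ≤ (J.image fun j₀ => (App.bc i j₀ : App n m)).card +
            (J.image fun j₀ => (App.ac (H j₀) j₀ : App n m)).card :=
            Finset.card_union_le _ _
        _ ≤ J.card + J.card := add_le_add Finset.card_image_le Finset.card_image_le
        _ < J.card + J.card + 1 := by omega
        _ = _ := by
            rw [Finset.card_insert_of_notMem hnm, Finset.card_union_of_disjoint hd2,
              Finset.card_image_of_injective _ hinj3,
              Finset.card_image_of_injective _ hinj4]

end Red
/-- for a monotone 1-in-3 SAT instance `φ` (clauses of size exactly 3,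
every variable occurring in some clause), the instance `G_φ` admits a matching that is
popular among all feasible matchings iff `φ` has a 1-in-3 satisfying assignment. -/
theorem stmt15 (n m : ℕ) (Cl : Fin m → Finset (Fin n))
    (h3 : ∀ j, (Cl j).card = 3) (hocc : ∀ i, ∃ j, i ∈ Cl j) :
    (∃ M : App n m → Option (Post n m), Red.Popular Cl M) ↔ Red.OneInThree Cl := by
  constructor
  · rintro ⟨M, hM, hF, hpop⟩
    classical
    refine ⟨fun i => if M (.bv i) = some (.pv i) then true else false, ?_⟩
    have hη_iff : ∀ i, (if M (.bv i) = some (.pv i) then true else false) = true ↔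
        M (.bv i) = some (.pv i) := by
      intro i
      by_cases h : M (.bv i) = some (.pv i) <;> simp [h]
    have key : ∀ j, ∀ i ∈ Cl j,
        ((if M (.bv i) = some (.pv i) then true else false) = true ↔
          M (.ac i j) = some (.pc j)) := by
      intro j i hij
      rw [hη_iff]
      constructor
      · intro hbpv
        have hat : M (.av i) = some (.pt i) := by
          rcases hMa : M (.av i) with _ | p
          · exact absurd hMa (Red.Am h3 hocc hM hF hpop i)
          · rcases Red.av_cases hM hMa with rfl | rfl
            · exact absurd (Red.not_both (hF.1 i) hMa hbpv (by simp)) (by simp)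
            · exact rfl
        rcases Red.LA h3 hocc hM hF hpop hij with h | h
        · exact h
        · exact absurd (Red.not_both_mem (hF.2.2.2.2.2.2.1 i j hij) (by simp)
            (by simp) (by simp) h hat) (by simp)
      · intro hac
        have hnbc : M (.bc i j) ≠ some (.pc j) := fun hbc =>
          Red.not_both_pair (hF.2.2.1 j i hij) hac hbc
        rcases Red.LB h3 hocc hM hF hpop hij with h | h
        · exact absurd h hnbc
        · rcases hMb : M (.bv i) with _ | p
          · exact absurd hMb (Red.Bm h3 hocc hM hF hpop i)
          · rcases Red.bv_cases hM hMb with rfl | rfl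
            · exact rfl
            · exact absurd (Red.not_both_mem (hF.2.2.2.2.2.2.2.2 i j hij) (by simp)
                (by simp) (by simp) h hMb) (by simp)
    intro j
    have hfeq : (Cl j).filter
        (fun i => (if M (.bv i) = some (.pv i) then true else false) = true) =
        (Cl j).filter (fun i => M (.ac i j) = some (.pc j)) := by
      apply Finset.filter_congr
      intro i hi
      simp only [key j i hi]
    rw [hfeq]
    apply le_antisymm (hF.2.2.2.1 j)
    have hex : ∃ i ∈ Cl j, M (.ac i j) = some (.pc j) := by
      by_contra hno
      push_neg at hno
      have hall : ∀ i ∈ Cl j, M (.bc i j) = some (.pc j) := by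
        intro i hi
        rcases Red.LB h3 hocc hM hF hpop hi with h | h
        · exact h
        · rcases Red.LA h3 hocc hM hF hpop hi with h' | h'
          · exact absurd h' (hno i hi)
          · exact absurd (Red.G3 h3 hocc hM hF hpop hi h' h) (by simp)
      have h2 := hF.2.2.2.2.1 j
      rw [Finset.filter_true_of_mem hall, h3 j] at h2
      omega
    obtain ⟨i₀, hi₀, hac₀⟩ := hex
    exact Finset.card_pos.mpr ⟨i₀, Finset.mem_filter.mpr ⟨hi₀, hac₀⟩⟩
  · rintro ⟨η, hη⟩
    exact ⟨Red.Mh Cl η, Red.Mh_popular h3 hocc hη⟩
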